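/- arXiv:2307.13075 — 4 statements merged into one kernel-verified Lean document; each statement's English description precedes it below -/
import Mathlib

section
/- Let S be a finite set of Wang prototiles. If for every n ∈ ℕ there exists an S-tiling of the square region {0,…,n−1} × {0,…,n−1}, then there exists a total S-tiling of the plane ℤ × ℤ. -/
/-- A Wang prototile: a 4-tuple `(l, u, r, b)` of natural-number edge colours. -/
abbrev WangTile : Type := ℕ × ℕ × ℕ × ℕ

def tileLeft (t : WangTile) : ℕ := t.1
def tileUp (t : WangTile) : ℕ := t.2.1
def tileRight (t : WangTile) : ℕ := t.2.2.1
def tileBottom (t : WangTile) : ℕ := t.2.2.2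

/-- `f` is an `S`-tiling of the region `R ⊆ ℤ × ℤ`: on `R` the tiles come from `S`,
and horizontally/vertically adjacent positions inside `R` have matching edge colours. -/
def IsTiling (S : Set WangTile) (R : Set (ℤ × ℤ)) (f : ℤ × ℤ → WangTile) : Prop :=
  (∀ p ∈ R, f p ∈ S) ∧
  (∀ x y : ℤ, ((x, y) : ℤ × ℤ) ∈ R → ((x + 1, y) : ℤ × ℤ) ∈ R →
    tileRight (f (x, y)) = tileLeft (f (x + 1, y))) ∧
  (∀ x y : ℤ, ((x, y) : ℤ × ℤ) ∈ R → ((x, y + 1) : ℤ × ℤ) ∈ R →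
    tileUp (f (x, y)) = tileBottom (f (x, y + 1)))

open Filter

/-- Ultrafilter pigeonhole: if a sequence lands in a finite set on an
ultrafilter-large set, then it equals some fixed element on a large set. -/
lemma ultra_pigeon {α : Type*} [DecidableEq α] (U : Ultrafilter ℕ) (g : ℕ → α) :
    ∀ (T : Finset α), {n | g n ∈ T} ∈ U → ∃ s ∈ T, {n | g n = s} ∈ U := by
  intro T
  induction T using Finset.induction_on with
  | empty =>
    intro hg
    simp only [Finset.notMem_empty, Set.setOf_false] at hg
    exact absurd hg (Filter.empty_notMem _)
  | @insert a T ha ih =>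
    intro hg
    have hun : {n | g n = a} ∪ {n | g n ∈ T} ∈ U := by
      refine Filter.mem_of_superset hg ?_
      intro n hn
      simp only [Finset.mem_insert, Set.mem_setOf_eq] at hn
      simpa using hn
    rcases Ultrafilter.union_mem_iff.mp hun with h1 | h2
    · exact ⟨a, by simp, h1⟩
    · obtain ⟨s, hs, hss⟩ := ih h2
      exact ⟨s, by simp [hs], hss⟩

/-- **Extension theorem.** If a finite set `S` of Wang prototiles tiles every
`n × n` square, then it has a total tiling of the plane. -/
theorem wang_extension_theorem (S : Finset WangTile)
    (h : ∀ n : ℕ, ∃ f : ℤ × ℤ → WangTile,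
      IsTiling (↑S) {p : ℤ × ℤ | 0 ≤ p.1 ∧ p.1 < (n : ℤ) ∧ 0 ≤ p.2 ∧ p.2 < (n : ℤ)} f) :
    ∃ f : ℤ × ℤ → WangTile, IsTiling (↑S) Set.univ f := by
  classical
  choose g hg using h
  set U : Ultrafilter ℕ := Ultrafilter.of atTop with hUdef
  have hle : (U : Filter ℕ) ≤ atTop := Ultrafilter.of_le atTop
  -- shifted tilings: `h' n` tiles the square `[-n, n] × [-n, n]`
  set h' : ℕ → ℤ × ℤ → WangTile :=
    fun n p => g (2 * n + 1) (p.1 + (n : ℤ), p.2 + (n : ℤ)) with hh'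
  -- region membership helper
  have hreg : ∀ (n : ℕ) (p : ℤ × ℤ), -(n : ℤ) ≤ p.1 → p.1 ≤ (n : ℤ) →
      -(n : ℤ) ≤ p.2 → p.2 ≤ (n : ℤ) →
      ((p.1 + (n : ℤ), p.2 + (n : ℤ)) : ℤ × ℤ) ∈
        {q : ℤ × ℤ | 0 ≤ q.1 ∧ q.1 < ((2 * n + 1 : ℕ) : ℤ) ∧
          0 ≤ q.2 ∧ q.2 < ((2 * n + 1 : ℕ) : ℤ)} := by
    intro n p h1 h2 h3 h4
    constructor
    · simpa using by linarith
    refine ⟨?_, ?_, ?_⟩ <;> push_cast <;> linarith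
  -- each position's tile is eventually in S
  have hmem : ∀ p : ℤ × ℤ, {n | h' n p ∈ S} ∈ U := by
    intro p
    apply hle
    have : ∀ᶠ n in atTop, h' n p ∈ S := by
      rw [eventually_atTop]
      refine ⟨p.1.natAbs + p.2.natAbs, fun n hn => ?_⟩
      exact (hg (2 * n + 1)).1 _ (hreg n p (by omega) (by omega) (by omega) (by omega))
    exact this
  have key : ∀ p : ℤ × ℤ, ∃ s ∈ S, {n | h' n p = s} ∈ U :=
    fun p => ultra_pigeon U (fun n => h' n p) S (hmem p)
  choose f hfS hf using key
  refine ⟨f, fun p _ => by exact_mod_cast hfS p, ?_, ?_⟩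
  · -- horizontal matching
    intro x y _ _
    have hA := hf (x, y)
    have hB := hf (x + 1, y)
    have hC : {n : ℕ | x.natAbs + y.natAbs + 1 ≤ n} ∈ U := hle (eventually_atTop.mpr ⟨_, fun n hn => hn⟩)
    obtain ⟨n, ⟨hn1, hn2⟩, hn3⟩ :=
      Ultrafilter.nonempty_of_mem (inter_mem (inter_mem hA hB) hC)
    have hn3' : x.natAbs + y.natAbs + 1 ≤ n := hn3
    rw [← hn1, ← hn2]
    have hreg1 := hreg n (x, y) (by simp; omega) (by simp; omega) (by simp; omega) (by simp; omega)
    have hreg2 := hreg n (x + 1, y) (by simp; omega) (by simp; omega) (by simp; omega) (by simp; omega)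
    have := (hg (2 * n + 1)).2.1 (x + (n : ℤ)) (y + (n : ℤ)) hreg1 (by
      have : ((x + (n : ℤ)) + 1, y + (n : ℤ)) = ((x + 1) + (n : ℤ), y + (n : ℤ)) := by ring_nf
      rw [this]; exact hreg2)
    simp only [hh']
    convert this using 3 <;> ring_nf
  · -- vertical matching
    intro x y _ _
    have hA := hf (x, y)
    have hB := hf (x, y + 1)
    have hC : {n : ℕ | x.natAbs + y.natAbs + 1 ≤ n} ∈ U := hle (eventually_atTop.mpr ⟨_, fun n hn => hn⟩)
    obtain ⟨n, ⟨hn1, hn2⟩, hn3⟩ :=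
      Ultrafilter.nonempty_of_mem (inter_mem (inter_mem hA hB) hC)
    have hn3' : x.natAbs + y.natAbs + 1 ≤ n := hn3
    rw [← hn1, ← hn2]
    have hreg1 := hreg n (x, y) (by simp; omega) (by simp; omega) (by simp; omega) (by simp; omega)
    have hreg2 := hreg n (x, y + 1) (by simp; omega) (by simp; omega) (by simp; omega) (by simp; omega)
    have := (hg (2 * n + 1)).2.2 (x + (n : ℤ)) (y + (n : ℤ)) hreg1 (by
      have : (x + (n : ℤ), (y + (n : ℤ)) + 1) = (x + (n : ℤ), (y + 1) + (n : ℤ)) := by ring_nf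
      rw [this]; exact hreg2)
    simp only [hh']
    convert this using 3 <;> ring_nf
end

section
/- TILE ≡_m ILL, that is, TILE ≤_m ILL and ILL ≤_m TILE. -/
/-- The standard enumeration of partial computable functions `ℕ →. ℕ`. -/
def Phi (e : ℕ) : ℕ →. ℕ := (Denumerable.ofNat Nat.Partrec.Code e).eval

/-- `φ_e` is total. -/
def PhiTotal (e : ℕ) : Prop := ∀ m : ℕ, (Phi e m).Dom

/-- `φ_e` is total and `{0,1}`-valued. -/
def PhiTotalBool (e : ℕ) : Prop := ∀ m : ℕ, ∃ v : ℕ, v ∈ Phi e m ∧ (v = 0 ∨ v = 1)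

/-- The set of Wang prototiles coded by `e`: tiles whose code is accepted by `φ_e`. -/
def PhiTileSet (e : ℕ) : Set WangTile := {t : WangTile | 1 ∈ Phi e (Encodable.encode t)}

/-- The set of finite sequences coded by `e`: sequences whose code is accepted by `φ_e`. -/
def TSet (e : ℕ) : Set (List ℕ) := {σ : List ℕ | 1 ∈ Phi e (Encodable.encode σ)}

/-- A tree: a set of finite sequences closed under initial segments. -/
def IsTree (T : Set (List ℕ)) : Prop := ∀ σ ∈ T, ∀ τ : List ℕ, τ <+: σ → τ ∈ T

/-- A tree is ill-founded if it has an infinite path. -/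
def IllFounded (T : Set (List ℕ)) : Prop :=
  ∃ p : ℕ → ℕ, ∀ n : ℕ, (List.range n).map p ∈ T

def TILE : Set ℕ :=
  {e | PhiTotalBool e ∧ ∃ f : ℤ × ℤ → WangTile, IsTiling (PhiTileSet e) Set.univ f}

def ILL : Set ℕ := {e | PhiTotalBool e ∧ IsTree (TSet e) ∧ IllFounded (TSet e)}

open Nat.Partrec (Code)
open Nat.Partrec.Code

namespace TI


/-! ### integer coding -/

def sR (a : ℕ) : ℕ := if a = 1 then 0 else if a % 2 = 0 then a + 2 else a - 2
def zOf (a : ℕ) : ℤ := if a % 2 = 0 then ((a / 2 : ℕ) : ℤ) else -(((a / 2 : ℕ) : ℤ) + 1)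
def nOf (k : ℤ) : ℕ := if 0 ≤ k then 2 * k.toNat else 2 * (-k).toNat - 1

lemma zOf_nOf (k : ℤ) : zOf (nOf k) = k := by
  rcases le_or_gt 0 k with h | h
  · have : nOf k = 2 * k.toNat := if_pos h
    rw [this]
    unfold zOf
    rw [if_pos (by omega)]
    push_cast
    omega
  · have : nOf k = 2 * (-k).toNat - 1 := if_neg (by omega)
    have h1 : 1 ≤ (-k).toNat := by omega
    rw [this]
    unfold zOf
    rw [if_neg (by omega)]
    have h2 : (2 * (-k).toNat - 1) / 2 = (-k).toNat - 1 := by omega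
    rw [h2]
    push_cast [h1]
    omega

lemma nOf_zOf (a : ℕ) : nOf (zOf a) = a := by
  rcases Nat.even_or_odd a with h | h
  · have h2 : a % 2 = 0 := Nat.even_iff.mp h
    have : zOf a = ((a / 2 : ℕ) : ℤ) := if_pos h2
    rw [this]
    unfold nOf
    rw [if_pos (by positivity)]
    omega
  · have h2 : a % 2 = 1 := Nat.odd_iff.mp h
    have : zOf a = -(((a / 2 : ℕ) : ℤ) + 1) := if_neg (by omega)
    rw [this]
    unfold nOf
    rw [if_neg (by omega)]
    omega

lemma zOf_injective : Function.Injective zOf :=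
  Function.LeftInverse.injective nOf_zOf

lemma zOf_sR (a : ℕ) : zOf (sR a) = zOf a + 1 := by
  rcases eq_or_ne a 1 with rfl | h1
  · decide
  rcases Nat.even_or_odd a with h | h
  · have h2 : a % 2 = 0 := Nat.even_iff.mp h
    have hs : sR a = a + 2 := by unfold sR; rw [if_neg h1, if_pos h2]
    rw [hs]
    unfold zOf
    rw [if_pos (by omega), if_pos h2]
    push_cast
    omega
  · have h2 : a % 2 = 1 := Nat.odd_iff.mp h
    have h3 : 3 ≤ a := by omega
    have hs : sR a = a - 2 := by unfold sR; rw [if_neg h1, if_neg (by omega)]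
    rw [hs]
    unfold zOf
    rw [if_neg (by omega), if_neg (by omega)]
    have e1 : (a - 2) / 2 = a / 2 - 1 := by omega
    rw [e1]
    have h4 : 1 ≤ a / 2 := by omega
    push_cast [h4]
    omega

lemma nOf_add_one (k : ℤ) : nOf (k + 1) = sR (nOf k) := by
  apply zOf_injective
  rw [zOf_nOf, zOf_sR, zOf_nOf]

def lenC (a : ℕ) : ℕ := if a % 2 = 0 then a / 2 else 0

lemma lenC_eq (a : ℕ) : lenC a = (zOf a).toNat := by
  rcases Nat.even_or_odd a with h | h
  · have h2 : a % 2 = 0 := Nat.even_iff.mp h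
    have : zOf a = ((a / 2 : ℕ) : ℤ) := if_pos h2
    rw [this]
    unfold lenC
    rw [if_pos h2]
    omega
  · have h2 : a % 2 = 1 := Nat.odd_iff.mp h
    have : zOf a = -(((a / 2 : ℕ) : ℤ) + 1) := if_neg (by omega)
    rw [this]
    unfold lenC
    rw [if_neg (by omega)]
    omega

def npC (a : ℕ) : Bool := decide (a % 2 = 1) || decide (a = 0)

lemma npC_iff (a : ℕ) : npC a = true ↔ zOf a ≤ 0 := by
  rcases Nat.even_or_odd a with h | h
  · have h2 : a % 2 = 0 := Nat.even_iff.mp h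
    have : zOf a = ((a / 2 : ℕ) : ℤ) := if_pos h2
    rw [this]
    unfold npC
    simp [h2]
    omega
  · have h2 : a % 2 = 1 := Nat.odd_iff.mp h
    have : zOf a = -(((a / 2 : ℕ) : ℤ) + 1) := if_neg (by omega)
    rw [this]
    unfold npC
    simp [h2]
    omega

end TI

namespace TI

/-! ### values of Phi -/

open Classical in
noncomputable def pval (e m : ℕ) : ℕ :=
  if h : (Phi e m).Dom then (Phi e m).get h else 0

lemma pval_mem {e m : ℕ} (h : (Phi e m).Dom) : pval e m ∈ Phi e m := by
  unfold pval
  classical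
  rw [dif_pos h]
  exact Part.get_mem h

lemma pval_eq {e m v : ℕ} (h : v ∈ Phi e m) : pval e m = v := by
  have hd : (Phi e m).Dom := Part.dom_iff_mem.mpr ⟨v, h⟩
  exact Part.mem_unique (pval_mem hd) h

/-! ### all is primrec -/

lemma list_all_primrec {α β : Type*} [Primcodable α] [Primcodable β]
    {f : α → List β} {g : α → β → Bool} (hf : Primrec f) (hg : Primrec₂ g) :
    Primrec fun a => (f a).all (g a) := by
  have h1 : Primrec fun a => (f a).foldr (fun b s => g a b && s) true :=
    Primrec.list_foldr hf (Primrec.const true)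
      ((Primrec.and.comp (hg.comp Primrec.fst (Primrec.fst.comp Primrec.snd))
        (Primrec.snd.comp Primrec.snd)).to₂)
  refine h1.of_eq fun a => ?_
  induction f a with
  | nil => rfl
  | cons b l ih => simp [List.all_cons, ih]




/-! ### the generic reduction construction -/

section Generic

variable (q : ℕ → List ℕ) (out : ℕ → List ℕ → ℕ)

/-- one step of the search -/
def Fstep (x s : ℕ) : Option ℕ :=
  bif (q x.unpair.2).all (fun m => (evaln s (Denumerable.ofNat Code x.unpair.1) m).isSome)
  then some (out x.unpair.2
    ((q x.unpair.2).map fun m => ((evaln s (Denumerable.ofNat Code x.unpair.1) m).getD 0)))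
  else none

variable {q out}

lemma Fstep_primrec (hq : Primrec q) (hout : Primrec₂ out) : Primrec₂ (Fstep q out) := by
  have hx2 : Primrec fun p : ℕ × ℕ => p.1.unpair.2 :=
    (Primrec.snd.comp Primrec.unpair).comp Primrec.fst
  have hcode : Primrec fun p : ℕ × ℕ => (Denumerable.ofNat Code p.1.unpair.1) :=
    (Primrec.ofNat Code).comp ((Primrec.fst.comp Primrec.unpair).comp Primrec.fst)
  -- evaln as a two-argument function of (p, m)
  have hev : Primrec₂ fun (p : ℕ × ℕ) (m : ℕ) =>
      evaln p.2 (Denumerable.ofNat Code p.1.unpair.1) m := by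
    have := Nat.Partrec.Code.primrec_evaln
    exact this.comp (Primrec.pair
      (Primrec.pair (Primrec.snd.comp Primrec.fst) (hcode.comp Primrec.fst)) Primrec.snd)
  have hcond : Primrec fun p : ℕ × ℕ =>
      (q p.1.unpair.2).all fun m => (evaln p.2 (Denumerable.ofNat Code p.1.unpair.1) m).isSome :=
    list_all_primrec (hq.comp hx2) ((Primrec.option_isSome.comp₂ hev))
  have hval : Primrec fun p : ℕ × ℕ =>
      out p.1.unpair.2 ((q p.1.unpair.2).map
        fun m => (evaln p.2 (Denumerable.ofNat Code p.1.unpair.1) m).getD 0) :=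
    hout.comp hx2 (Primrec.list_map (hq.comp hx2)
      (Primrec.option_getD.comp₂ hev (Primrec₂.const 0)))
  exact (Primrec.cond hcond (Primrec.option_some.comp hval) (Primrec.const none)).to₂

lemma Fstep_mono {x s s' a : ℕ} (hss : s ≤ s') (h : a ∈ Fstep q out x s) :
    a ∈ Fstep q out x s' := by
  unfold Fstep at h ⊢
  set c := Denumerable.ofNat Code x.unpair.1 with hc
  by_cases hall : (q x.unpair.2).all (fun m => (evaln s c m).isSome) = true
  swap
  · simp [hall] at h
  have hall' : ∀ m ∈ q x.unpair.2, (evaln s c m).isSome := by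
    simpa [List.all_eq_true] using hall
  have hall2 : ∀ m ∈ q x.unpair.2, (evaln s' c m).isSome := by
    intro m hm
    obtain ⟨v, hv⟩ := Option.isSome_iff_exists.mp (hall' m hm)
    exact Option.isSome_iff_exists.mpr ⟨v, evaln_mono hss hv⟩
  have hall2' : (q x.unpair.2).all (fun m => (evaln s' c m).isSome) = true := by
    simpa [List.all_eq_true] using hall2
  rw [hall, cond_true] at h
  rw [hall2', cond_true]
  have hmapeq : ((q x.unpair.2).map fun m => (evaln s c m).getD 0)
      = ((q x.unpair.2).map fun m => (evaln s' c m).getD 0) := by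
    apply List.map_congr_left
    intro m hm
    obtain ⟨v, hv⟩ := Option.isSome_iff_exists.mp (hall' m hm)
    have hv' : evaln s' c m = some v := evaln_mono hss hv
    rw [hv, hv']
  rw [hmapeq] at h
  exact h

lemma Fstep_spec {e n a : ℕ} :
    (∃ s, a ∈ Fstep q out (Nat.pair e n) s) ↔
      ((∀ m ∈ q n, (Phi e m).Dom) ∧ a = out n ((q n).map (pval e))) := by
  set c := Denumerable.ofNat Code e with hc
  have hphi : Phi e = c.eval := rfl
  constructor
  · rintro ⟨s, hs⟩
    unfold Fstep at hs
    simp only [Nat.unpair_pair] at hs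
    rw [← hc] at hs
    by_cases hall : (q n).all (fun m => (evaln s c m).isSome) = true
    swap
    · simp [hall] at hs
    rw [hall, cond_true, Option.mem_def, Option.some_inj] at hs
    have hall' : ∀ m ∈ q n, (evaln s c m).isSome := by
      simpa [List.all_eq_true] using hall
    have hdom : ∀ m ∈ q n, (Phi e m).Dom := by
      intro m hm
      obtain ⟨v, hv⟩ := Option.isSome_iff_exists.mp (hall' m hm)
      have : v ∈ Phi e m := by rw [hphi]; exact evaln_sound hv
      exact Part.dom_iff_mem.mpr ⟨v, this⟩
    refine ⟨hdom, ?_⟩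
    rw [← hs]
    congr 1
    apply List.map_congr_left
    intro m hm
    obtain ⟨v, hv⟩ := Option.isSome_iff_exists.mp (hall' m hm)
    have hv2 : v ∈ Phi e m := by rw [hphi]; exact evaln_sound hv
    rw [hv, pval_eq hv2]
    rfl
  · rintro ⟨hdom, rfl⟩
    -- find a uniform stage
    have hstage : ∀ l : List ℕ, (∀ m ∈ l, (Phi e m).Dom) →
        ∃ s, ∀ m ∈ l, evaln s c m = some (pval e m) := by
      intro l
      induction l with
      | nil => exact fun _ => ⟨0, by simp⟩
      | cons m l ih =>
        intro hdom'
        have hd : (Phi e m).Dom := hdom' m List.mem_cons_self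
        obtain ⟨s1, hs1⟩ := evaln_complete.mp (by rw [← hphi]; exact pval_mem hd)
        obtain ⟨s2, hs2⟩ := ih (fun m' hm' => hdom' m' (List.mem_cons_of_mem _ hm'))
        refine ⟨max s1 s2, ?_⟩
        intro m' hm'
        rcases List.mem_cons.mp hm' with rfl | hm'
        · exact evaln_mono (le_max_left _ _) hs1
        · exact evaln_mono (le_max_right _ _) (hs2 m' hm')
    obtain ⟨s, hs⟩ := hstage (q n) hdom
    refine ⟨s, ?_⟩
    unfold Fstep
    simp only [Nat.unpair_pair]
    have hall : (q n).all (fun m => (evaln s c m).isSome) = true := by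
      simp only [List.all_eq_true]
      intro m hm
      rw [hs m hm]
      rfl
    rw [hall, cond_true]
    have : ((q n).map fun m => (evaln s c m).getD 0) = (q n).map (pval e) := by
      apply List.map_congr_left
      intro m hm
      rw [hs m hm]
      rfl
    rw [this]
    rfl

theorem exists_reduction (hq : Primrec q) (hout : Primrec₂ out) :
    ∃ r : ℕ → ℕ, Computable r ∧ ∀ e n a,
      (a ∈ Phi (r e) n ↔
        ((∀ m ∈ q n, (Phi e m).Dom) ∧ a = out n ((q n).map (pval e)))) := by
  have hG : Partrec fun x : ℕ => Nat.rfindOpt (Fstep q out x) :=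
    Partrec.rfindOpt (Fstep_primrec hq hout).to_comp
  obtain ⟨c₀, hc₀⟩ := exists_code.mp (Partrec.nat_iff.mp hG)
  obtain ⟨cf, hcf_comp, hcf⟩ := smn
  refine ⟨fun e => Encodable.encode (cf c₀ e),
    Computable.encode.comp (hcf_comp.comp (Computable.const c₀) Computable.id), ?_⟩
  intro e n a
  have h1 : Phi (Encodable.encode (cf c₀ e)) n = Nat.rfindOpt (Fstep q out (Nat.pair e n)) := by
    show (Denumerable.ofNat Code (Encodable.encode (cf c₀ e))).eval n = _
    rw [Denumerable.ofNat_encode, hcf, hc₀]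
  rw [h1, Nat.rfindOpt_mono (fun {a m n} h hm => Fstep_mono h hm)]
  exact Fstep_spec

end Generic


end TI

namespace TI

/-! ### tile field extraction on codes -/

def tL (m : ℕ) : ℕ := m.unpair.1
def tU (m : ℕ) : ℕ := m.unpair.2.unpair.1
def tR (m : ℕ) : ℕ := m.unpair.2.unpair.2.unpair.1
def tB (m : ℕ) : ℕ := m.unpair.2.unpair.2.unpair.2

lemma encode_tile (t : WangTile) :
    Encodable.encode t = Nat.pair t.1 (Nat.pair t.2.1 (Nat.pair t.2.2.1 t.2.2.2)) := by
  rcases t with ⟨a, b, c, d⟩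
  simp [Encodable.encode_prod_val]

lemma tL_encode (t : WangTile) : tL (Encodable.encode t) = tileLeft t := by
  rw [encode_tile]; simp [tL, tileLeft]
lemma tU_encode (t : WangTile) : tU (Encodable.encode t) = tileUp t := by
  rw [encode_tile]; simp [tU, tileUp]
lemma tR_encode (t : WangTile) : tR (Encodable.encode t) = tileRight t := by
  rw [encode_tile]; simp [tR, tileRight]
lemma tB_encode (t : WangTile) : tB (Encodable.encode t) = tileBottom t := by
  rw [encode_tile]; simp [tB, tileBottom]

lemma tL_code (m : ℕ) : tileLeft (Denumerable.ofNat WangTile m) = tL m := by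
  conv_rhs => rw [← Denumerable.encode_ofNat (α := WangTile) m]
  rw [tL_encode]
lemma tU_code (m : ℕ) : tileUp (Denumerable.ofNat WangTile m) = tU m := by
  conv_rhs => rw [← Denumerable.encode_ofNat (α := WangTile) m]
  rw [tU_encode]
lemma tR_code (m : ℕ) : tileRight (Denumerable.ofNat WangTile m) = tR m := by
  conv_rhs => rw [← Denumerable.encode_ofNat (α := WangTile) m]
  rw [tR_encode]
lemma tB_code (m : ℕ) : tileBottom (Denumerable.ofNat WangTile m) = tB m := by
  conv_rhs => rw [← Denumerable.encode_ofNat (α := WangTile) m]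
  rw [tB_encode]

/-! ### positions -/

def posn (i : ℕ) : ℤ × ℤ := (zOf i.unpair.1, zOf i.unpair.2)
def pcode (z : ℤ × ℤ) : ℕ := Nat.pair (nOf z.1) (nOf z.2)
def hnb (i : ℕ) : ℕ := Nat.pair (sR i.unpair.1) i.unpair.2
def vnb (i : ℕ) : ℕ := Nat.pair i.unpair.1 (sR i.unpair.2)

lemma posn_pcode (z : ℤ × ℤ) : posn (pcode z) = z := by
  simp [posn, pcode, zOf_nOf]

lemma hnb_iff {i j : ℕ} : hnb i = j ↔ posn j = ((posn i).1 + 1, (posn i).2) := by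
  constructor
  · rintro rfl
    simp [posn, hnb, zOf_sR]
  · intro h
    have h1 : zOf j.unpair.1 = zOf (sR i.unpair.1) := by
      rw [zOf_sR]; exact congrArg Prod.fst h
    have h2 : zOf j.unpair.2 = zOf i.unpair.2 := congrArg Prod.snd h
    have e1 := zOf_injective h1
    have e2 := zOf_injective h2
    unfold hnb
    rw [← e1, ← e2, Nat.pair_unpair]

lemma vnb_iff {i j : ℕ} : vnb i = j ↔ posn j = ((posn i).1, (posn i).2 + 1) := by
  constructor
  · rintro rfl
    simp [posn, vnb, zOf_sR]
  · intro h
    have h1 : zOf j.unpair.1 = zOf i.unpair.1 := congrArg Prod.fst h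
    have h2 : zOf j.unpair.2 = zOf (sR i.unpair.2) := by
      rw [zOf_sR]; exact congrArg Prod.snd h
    have e1 := zOf_injective h1
    have e2 := zOf_injective h2
    unfold vnb
    rw [← e1, ← e2, Nat.pair_unpair]

end TI

namespace TI

/-! ### the tree of partial tilings -/

def q1 (n : ℕ) : List ℕ :=
  (Denumerable.ofNat (List ℕ) n) ++ List.range (Denumerable.ofNat (List ℕ) n).length

def adjOK (σ : List ℕ) (i j : ℕ) : Bool :=
  ((!(decide (hnb i = j))) || decide (tR (σ.getD i 0) = tL (σ.getD j 0))) &&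
  ((!(decide (vnb i = j))) || decide (tU (σ.getD i 0) = tB (σ.getD j 0)))

def check1 (n : ℕ) (vs : List ℕ) : Bool :=
  ((List.range (Denumerable.ofNat (List ℕ) n).length).all
    fun i => decide (vs.getD i 0 = 1)) &&
  (((List.range (Denumerable.ofNat (List ℕ) n).length).all
    fun i => decide (vs.getD ((Denumerable.ofNat (List ℕ) n).length + i) 0 ≤ 1)) &&
  ((List.range (Denumerable.ofNat (List ℕ) n).length).all fun i =>
    (List.range (Denumerable.ofNat (List ℕ) n).length).all fun j =>
      adjOK (Denumerable.ofNat (List ℕ) n) i j))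

def out1 (n : ℕ) (vs : List ℕ) : ℕ := cond (check1 n vs) 1 0

lemma sR_primrec : Primrec sR := by
  unfold sR
  exact Primrec.ite (Primrec.eq.comp Primrec.id (Primrec.const 1)) (Primrec.const 0)
    (Primrec.ite (Primrec.eq.comp (Primrec.nat_mod.comp Primrec.id (Primrec.const 2))
        (Primrec.const 0))
      (Primrec.nat_add.comp Primrec.id (Primrec.const 2))
      (Primrec.nat_sub.comp Primrec.id (Primrec.const 2)))

lemma unpair1_primrec : Primrec fun i : ℕ => i.unpair.1 :=
  Primrec.fst.comp Primrec.unpair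
lemma unpair2_primrec : Primrec fun i : ℕ => i.unpair.2 :=
  Primrec.snd.comp Primrec.unpair

lemma hnb_primrec : Primrec hnb :=
  Primrec₂.natPair.comp (sR_primrec.comp unpair1_primrec) unpair2_primrec
lemma vnb_primrec : Primrec vnb :=
  Primrec₂.natPair.comp unpair1_primrec (sR_primrec.comp unpair2_primrec)

lemma tL_primrec : Primrec tL := unpair1_primrec
lemma tU_primrec : Primrec tU := unpair1_primrec.comp unpair2_primrec
lemma tR_primrec : Primrec tR :=
  unpair1_primrec.comp (unpair2_primrec.comp unpair2_primrec)
lemma tB_primrec : Primrec tB :=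
  unpair2_primrec.comp (unpair2_primrec.comp unpair2_primrec)

lemma q1_primrec : Primrec q1 := by
  have hσ : Primrec fun n : ℕ => Denumerable.ofNat (List ℕ) n := Primrec.ofNat _
  exact Primrec.list_append.comp hσ
    (Primrec.list_range.comp (Primrec.list_length.comp hσ))

lemma check1_primrec : Primrec₂ check1 := by
  have hσ : Primrec fun p : ℕ × List ℕ => Denumerable.ofNat (List ℕ) p.1 :=
    (Primrec.ofNat _).comp Primrec.fst
  have hL : Primrec fun p : ℕ × List ℕ => (Denumerable.ofNat (List ℕ) p.1).length :=
    Primrec.list_length.comp hσ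
  have hrange : Primrec fun p : ℕ × List ℕ =>
      List.range (Denumerable.ofNat (List ℕ) p.1).length :=
    Primrec.list_range.comp hL
  have h1 : Primrec fun p : ℕ × List ℕ =>
      (List.range (Denumerable.ofNat (List ℕ) p.1).length).all
        fun i => decide (p.2.getD i 0 = 1) :=
    list_all_primrec hrange
      ((Primrec.eq.comp
        ((Primrec.list_getD 0).comp (Primrec.snd.comp Primrec.fst) Primrec.snd)
        (Primrec.const 1)).decide)
  have h2 : Primrec fun p : ℕ × List ℕ =>
      (List.range (Denumerable.ofNat (List ℕ) p.1).length).all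
        fun i => decide (p.2.getD ((Denumerable.ofNat (List ℕ) p.1).length + i) 0 ≤ 1) :=
    list_all_primrec hrange
      ((Primrec.nat_le.comp
        ((Primrec.list_getD 0).comp (Primrec.snd.comp Primrec.fst)
          (Primrec.nat_add.comp (hL.comp Primrec.fst) Primrec.snd))
        (Primrec.const 1)).decide)
  have hadj : Primrec₂ fun (x : (ℕ × List ℕ) × ℕ) (j : ℕ) =>
      adjOK (Denumerable.ofNat (List ℕ) x.1.1) x.2 j := by
    have hn : Primrec fun y : ((ℕ × List ℕ) × ℕ) × ℕ => y.1.1.1 :=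
      Primrec.fst.comp (Primrec.fst.comp Primrec.fst)
    have hi : Primrec fun y : ((ℕ × List ℕ) × ℕ) × ℕ => y.1.2 :=
      Primrec.snd.comp Primrec.fst
    have hj : Primrec fun y : ((ℕ × List ℕ) × ℕ) × ℕ => y.2 := Primrec.snd
    have hσ' : Primrec fun y : ((ℕ × List ℕ) × ℕ) × ℕ =>
        Denumerable.ofNat (List ℕ) y.1.1.1 := (Primrec.ofNat _).comp hn
    have hσi : Primrec fun y : ((ℕ × List ℕ) × ℕ) × ℕ =>
        (Denumerable.ofNat (List ℕ) y.1.1.1).getD y.1.2 0 :=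
      (Primrec.list_getD 0).comp hσ' hi
    have hσj : Primrec fun y : ((ℕ × List ℕ) × ℕ) × ℕ =>
        (Denumerable.ofNat (List ℕ) y.1.1.1).getD y.2 0 :=
      (Primrec.list_getD 0).comp hσ' hj
    exact (Primrec.and.comp
      (Primrec.or.comp
        (Primrec.not.comp (Primrec.eq.comp (hnb_primrec.comp hi) hj).decide)
        (Primrec.eq.comp (tR_primrec.comp hσi) (tL_primrec.comp hσj)).decide)
      (Primrec.or.comp
        (Primrec.not.comp (Primrec.eq.comp (vnb_primrec.comp hi) hj).decide)
        (Primrec.eq.comp (tU_primrec.comp hσi) (tB_primrec.comp hσj)).decide)).to₂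
  have h3 : Primrec fun p : ℕ × List ℕ =>
      (List.range (Denumerable.ofNat (List ℕ) p.1).length).all fun i =>
        (List.range (Denumerable.ofNat (List ℕ) p.1).length).all fun j =>
          adjOK (Denumerable.ofNat (List ℕ) p.1) i j :=
    list_all_primrec hrange
      ((list_all_primrec (hrange.comp Primrec.fst) hadj).to₂)
  exact (Primrec.and.comp h1 (Primrec.and.comp h2 h3)).to₂

lemma out1_primrec : Primrec₂ out1 :=
  (Primrec.cond (check1_primrec.comp Primrec.fst Primrec.snd)
    (Primrec.const 1) (Primrec.const 0)).to₂

end TI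

namespace TI

lemma getD_map_append₁ {g : ℕ → ℕ} {σ rest : List ℕ} {i : ℕ} (h : i < σ.length) :
    ((σ.map g) ++ rest).getD i 0 = g (σ.getD i 0) := by
  rw [List.getD_append _ _ _ _ (by simpa using h)]
  rw [List.getD_eq_getElem?_getD, List.getD_eq_getElem?_getD,
    List.getElem?_map, List.getElem?_eq_getElem h]
  simp

lemma getD_map_range {p : ℕ → ℕ} {n i : ℕ} (h : i < n) :
    ((List.range n).map p).getD i 0 = p i := by
  rw [List.getD_eq_getElem?_getD, List.getElem?_map,
    List.getElem?_eq_getElem (by simpa using h)]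
  simp

lemma getD_map_append₂ {g : ℕ → ℕ} {σ : List ℕ} {L i : ℕ} (h : i < L) :
    ((σ.map g) ++ (List.range L).map g).getD (σ.length + i) 0 = g i := by
  rw [List.getD_eq_getElem?_getD, List.getElem?_append_right (by simp), ]
  have : σ.length + i - (σ.map g).length = i := by simp
  rw [this, ← List.getD_eq_getElem?_getD, getD_map_range h]

lemma mem_map_range {p : ℕ → ℕ} {n i : ℕ} (h : i < n) : p i ∈ (List.range n).map p :=
  List.mem_map.mpr ⟨i, List.mem_range.mpr h, rfl⟩

lemma cond_one_iff {b : Bool} : (1 : ℕ) = cond b 1 0 ↔ b = true := by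
  cases b <;> simp

lemma adjOK_iff {σ : List ℕ} {i j : ℕ} : adjOK σ i j = true ↔
    ((hnb i = j → tR (σ.getD i 0) = tL (σ.getD j 0)) ∧
     (vnb i = j → tU (σ.getD i 0) = tB (σ.getD j 0))) := by
  simp [adjOK, Bool.and_eq_true, Bool.or_eq_true, decide_eq_true_eq,
    Bool.not_eq_true', decide_eq_false_iff_not, imp_iff_not_or]

/-- full characterization of acceptance for the direction-1 reduction -/
def Acc1 (e : ℕ) (σ : List ℕ) : Prop :=
  (∀ m ∈ σ, (Phi e m).Dom) ∧ (∀ i < σ.length, (Phi e i).Dom) ∧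
  (∀ i < σ.length, pval e (σ.getD i 0) = 1) ∧ (∀ i < σ.length, pval e i ≤ 1) ∧
  (∀ i, i < σ.length → ∀ j, j < σ.length →
    (hnb i = j → tR (σ.getD i 0) = tL (σ.getD j 0)) ∧
    (vnb i = j → tU (σ.getD i 0) = tB (σ.getD j 0)))

lemma accept1_iff {r : ℕ → ℕ}
    (hspec : ∀ e n a, a ∈ Phi (r e) n ↔
      ((∀ m ∈ q1 n, (Phi e m).Dom) ∧ a = out1 n ((q1 n).map (pval e))))
    (e : ℕ) (σ : List ℕ) :
    σ ∈ TSet (r e) ↔ Acc1 e σ := by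
  have hn : Denumerable.ofNat (List ℕ) (Encodable.encode σ) = σ :=
    Denumerable.ofNat_encode σ
  have hq1 : q1 (Encodable.encode σ) = σ ++ List.range σ.length := by
    unfold q1; rw [hn]
  have hvs : (q1 (Encodable.encode σ)).map (pval e)
      = σ.map (pval e) ++ (List.range σ.length).map (pval e) := by
    rw [hq1, List.map_append]
  have hdom_iff : (∀ m ∈ q1 (Encodable.encode σ), (Phi e m).Dom) ↔
      ((∀ m ∈ σ, (Phi e m).Dom) ∧ (∀ i < σ.length, (Phi e i).Dom)) := by
    rw [hq1]
    constructor
    · intro h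
      exact ⟨fun m hm => h m (List.mem_append_left _ hm),
        fun i hi => h i (List.mem_append_right _ (List.mem_range.mpr hi))⟩
    · rintro ⟨h1, h2⟩ m hm
      rcases List.mem_append.mp hm with h | h
      exacts [h1 m h, h2 m (List.mem_range.mp h)]
  have hcheck_iff :
      check1 (Encodable.encode σ) ((q1 (Encodable.encode σ)).map (pval e)) = true ↔
      ((∀ i < σ.length, pval e (σ.getD i 0) = 1) ∧
       (∀ i < σ.length, pval e i ≤ 1) ∧
       (∀ i, i < σ.length → ∀ j, j < σ.length →
         (hnb i = j → tR (σ.getD i 0) = tL (σ.getD j 0)) ∧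
         (vnb i = j → tU (σ.getD i 0) = tB (σ.getD j 0)))) := by
    unfold check1
    rw [hn, hvs]
    simp only [Bool.and_eq_true, List.all_eq_true, List.mem_range, decide_eq_true_eq]
    constructor
    · rintro ⟨h1, h2, h3⟩
      refine ⟨fun i hi => ?_, fun i hi => ?_, fun i hi j hj => adjOK_iff.mp (h3 i hi j hj)⟩
      · have := h1 i hi; rwa [getD_map_append₁ hi] at this
      · have := h2 i hi; rwa [getD_map_append₂ hi] at this
    · rintro ⟨h1, h2, h3⟩
      refine ⟨fun i hi => ?_, fun i hi => ?_, fun i hi j hj => adjOK_iff.mpr (h3 i hi j hj)⟩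
      · rw [getD_map_append₁ hi]; exact h1 i hi
      · rw [getD_map_append₂ hi]; exact h2 i hi
  show 1 ∈ Phi (r e) (Encodable.encode σ) ↔ _
  rw [hspec e (Encodable.encode σ) 1]
  unfold Acc1
  rw [hdom_iff]
  constructor
  · rintro ⟨⟨d1, d2⟩, hout⟩
    obtain ⟨c1, c2, c3⟩ := hcheck_iff.mp (cond_one_iff.mp hout)
    exact ⟨d1, d2, c1, c2, c3⟩
  · rintro ⟨d1, d2, c1, c2, c3⟩
    exact ⟨⟨d1, d2⟩, cond_one_iff.mpr (hcheck_iff.mpr ⟨c1, c2, c3⟩)⟩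

end TI

namespace TI

lemma totalBool_dom {e : ℕ} (h : PhiTotalBool e) (m : ℕ) : (Phi e m).Dom := by
  obtain ⟨v, hv, _⟩ := h m
  exact Part.dom_iff_mem.mpr ⟨v, hv⟩

lemma length_map_range {p : ℕ → ℕ} {n : ℕ} : ((List.range n).map p).length = n := by simp

theorem dir1_forward {r : ℕ → ℕ}
    (hspec : ∀ e n a, a ∈ Phi (r e) n ↔
      ((∀ m ∈ q1 n, (Phi e m).Dom) ∧ a = out1 n ((q1 n).map (pval e))))
    {e : ℕ} (he : e ∈ TILE) : r e ∈ ILL := by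
  obtain ⟨htb, f, hfS, hfH, hfV⟩ := he
  have hdom : ∀ m, (Phi e m).Dom := totalBool_dom htb
  refine ⟨?_, ?_, ?_⟩
  · -- PhiTotalBool (r e)
    intro n
    refine ⟨out1 n ((q1 n).map (pval e)),
      (hspec e n _).mpr ⟨fun m _ => hdom m, rfl⟩, ?_⟩
    unfold out1
    cases check1 n ((q1 n).map (pval e)) <;> simp
  · -- IsTree
    intro σ hσ τ hpre
    rw [accept1_iff hspec] at hσ ⊢
    obtain ⟨d1, d2, c1, c2, c3⟩ := hσ
    obtain ⟨rest, rfl⟩ := hpre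
    have hlen : τ.length ≤ (τ ++ rest).length := by simp
    have hg : ∀ i, i < τ.length → (τ ++ rest).getD i 0 = τ.getD i 0 := by
      intro i hi
      rw [List.getD_append _ _ _ _ hi]
    refine ⟨fun m hm => d1 m (List.mem_append_left _ hm),
      fun i hi => d2 i (lt_of_lt_of_le hi hlen),
      fun i hi => ?_, fun i hi => c2 i (lt_of_lt_of_le hi hlen),
      fun i hi j hj => ?_⟩
    · have := c1 i (lt_of_lt_of_le hi hlen)
      rwa [hg i hi] at this
    · have := c3 i (lt_of_lt_of_le hi hlen) j (lt_of_lt_of_le hj hlen)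
      rwa [hg i hi, hg j hj] at this
  · -- IllFounded
    refine ⟨fun n => Encodable.encode (f (posn n)), fun n => ?_⟩
    rw [accept1_iff hspec]
    set p : ℕ → ℕ := fun n => Encodable.encode (f (posn n)) with hp
    refine ⟨fun m _ => hdom m, fun i _ => hdom i, fun i hi => ?_, fun i _ => ?_,
      fun i hi j hj => ?_⟩
    · rw [length_map_range] at hi
      rw [getD_map_range hi]
      exact pval_eq (hfS (posn i) (Set.mem_univ _))
    · obtain ⟨v, hv, hor⟩ := htb i
      rw [pval_eq hv]
      omega
    · rw [length_map_range] at hi hj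
      rw [getD_map_range hi, getD_map_range hj]
      constructor
      · intro hadj
        have hpos := hnb_iff.mp hadj
        rw [hp]
        simp only []
        rw [tR_encode, tL_encode, hpos]
        have := hfH (posn i).1 (posn i).2 (Set.mem_univ _) (Set.mem_univ _)
        simpa using this
      · intro hadj
        have hpos := vnb_iff.mp hadj
        rw [hp]
        simp only []
        rw [tU_encode, tB_encode, hpos]
        have := hfV (posn i).1 (posn i).2 (Set.mem_univ _) (Set.mem_univ _)
        simpa using this

theorem dir1_backward {r : ℕ → ℕ}
    (hspec : ∀ e n a, a ∈ Phi (r e) n ↔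
      ((∀ m ∈ q1 n, (Phi e m).Dom) ∧ a = out1 n ((q1 n).map (pval e))))
    {e : ℕ} (he : r e ∈ ILL) : e ∈ TILE := by
  obtain ⟨htb', htree, p, hp⟩ := he
  have hAcc : ∀ n, Acc1 e ((List.range n).map p) :=
    fun n => (accept1_iff hspec e _).mp (hp n)
  have htot : ∀ m, (Phi e m).Dom := by
    intro m
    have := (hAcc (m + 1)).2.1 m (by rw [length_map_range]; omega)
    exact this
  have hpv1 : ∀ i, pval e (p i) = 1 := by
    intro i
    have := (hAcc (i + 1)).2.2.1 i (by rw [length_map_range]; omega)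
    rwa [getD_map_range (by omega)] at this
  refine ⟨?_, fun z => Denumerable.ofNat WangTile (p (pcode z)), ?_, ?_, ?_⟩
  · intro m
    have := (hAcc (m + 1)).2.2.2.1 m (by rw [length_map_range]; omega)
    exact ⟨pval e m, pval_mem (htot m), by omega⟩
  · intro z _
    show 1 ∈ Phi e (Encodable.encode (Denumerable.ofNat WangTile (p (pcode z))))
    rw [Denumerable.encode_ofNat]
    have := hpv1 (pcode z)
    rw [← this]
    exact pval_mem (htot _)
  · intro x y _ _
    set i := pcode (x, y)
    set j := pcode (x + 1, y)
    have hin : i < max i j + 1 := by omega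
    have hjn : j < max i j + 1 := by omega
    have hc3 := ((hAcc (max i j + 1)).2.2.2.2 i
      (by rw [length_map_range]; omega) j (by rw [length_map_range]; omega)).1
    rw [getD_map_range (by omega), getD_map_range (by omega)] at hc3
    have hadj : hnb i = j := by
      rw [hnb_iff, posn_pcode, posn_pcode]
    have := hc3 hadj
    rw [tR_code, tL_code]
    exact this
  · intro x y _ _
    set i := pcode (x, y)
    set j := pcode (x, y + 1)
    have hc3 := ((hAcc (max i j + 1)).2.2.2.2 i
      (by rw [length_map_range]; omega) j (by rw [length_map_range]; omega)).2
    rw [getD_map_range (by omega), getD_map_range (by omega)] at hc3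
    have hadj : vnb i = j := by
      rw [vnb_iff, posn_pcode, posn_pcode]
    have := hc3 hadj
    rw [tU_code, tB_code]
    exact this

theorem tile_le_ill : (· ∈ TILE) ≤₀ (· ∈ ILL) := by
  obtain ⟨r, hr, hspec⟩ := exists_reduction q1_primrec out1_primrec
  exact ⟨r, hr, fun e => ⟨fun h => dir1_forward hspec h, fun h => dir1_backward hspec h⟩⟩

end TI

namespace TI

/-! ### direction 2: encoding trees into tiles -/

def dl (s : ℕ) : ℕ :=
  Encodable.encode (((Denumerable.ofNat (List ℕ) s).reverse.tail).reverse)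

lemma dl_eq (s : ℕ) : dl s = Encodable.encode (Denumerable.ofNat (List ℕ) s).dropLast := by
  unfold dl
  rw [List.tail_reverse, List.reverse_reverse]

lemma dl_encode (σ : List ℕ) : dl (Encodable.encode σ) = Encodable.encode σ.dropLast := by
  rw [dl_eq, Denumerable.ofNat_encode]

def preC (a s : ℕ) : ℕ := bif npC a then Encodable.encode ([] : List ℕ) else dl s

def dA (n : ℕ) : ℕ := (tB n).unpair.1
def dB (n : ℕ) : ℕ := (tB n).unpair.2.unpair.1
def dS (n : ℕ) : ℕ := (tB n).unpair.2.unpair.2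

def ok2 (n : ℕ) : Bool :=
  decide (tL n = Nat.pair (dA n) (Nat.pair (dB n) (preC (dA n) (dS n)))) &&
  (decide (tU n = Nat.pair (dA n) (Nat.pair (sR (dB n)) (dS n))) &&
  (decide (tR n = Nat.pair (sR (dA n)) (Nat.pair (dB n) (dS n))) &&
  decide ((Denumerable.ofNat (List ℕ) (dS n)).length = lenC (dA n))))

def idx2 (n : ℕ) : ℕ := Nat.pair (dA n) (dB n)

def P2 (n : ℕ) : ℕ := (Denumerable.ofNat (List ℕ) (idx2 n)).length + 1

def q2 (n : ℕ) : List ℕ :=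
  bif ok2 n then
    dS n :: idx2 n ::
      (((List.range (P2 n)).map fun j => dl^[j] (idx2 n)) ++ List.range (idx2 n + 1))
  else []

def check2 (n : ℕ) (vs : List ℕ) : Bool :=
  ok2 n &&
  (decide (vs.getD 0 0 = 1) &&
  (((!(decide (vs.getD 1 0 = 1))) ||
      ((List.range (P2 n)).all fun j => decide (vs.getD (2 + j) 0 = 1))) &&
  ((List.range (idx2 n + 1)).all fun j => decide (vs.getD (2 + P2 n + j) 0 ≤ 1))))

def out2 (n : ℕ) (vs : List ℕ) : ℕ := cond (check2 n vs) 1 0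

/-! ### primrec -/

lemma dl_primrec : Primrec dl :=
  Primrec.encode.comp (Primrec.list_reverse.comp
    (Primrec.list_tail.comp (Primrec.list_reverse.comp (Primrec.ofNat _))))

lemma npC_primrec : Primrec npC := by
  unfold npC
  exact Primrec.or.comp
    (Primrec.eq.comp (Primrec.nat_mod.comp Primrec.id (Primrec.const 2)) (Primrec.const 1)).decide
    (Primrec.eq.comp Primrec.id (Primrec.const 0)).decide

lemma preC_primrec : Primrec₂ preC := by
  unfold preC
  exact (Primrec.cond (npC_primrec.comp Primrec.fst)
    (Primrec.const _) (dl_primrec.comp Primrec.snd)).to₂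

lemma lenC_primrec : Primrec lenC := by
  unfold lenC
  exact Primrec.ite
    (Primrec.eq.comp (Primrec.nat_mod.comp Primrec.id (Primrec.const 2)) (Primrec.const 0))
    (Primrec.nat_div.comp Primrec.id (Primrec.const 2)) (Primrec.const 0)

lemma tB_nat_primrec : Primrec tB := tB_primrec
lemma dA_primrec : Primrec dA := unpair1_primrec.comp tB_primrec
lemma dB_primrec : Primrec dB := unpair1_primrec.comp (unpair2_primrec.comp tB_primrec)
lemma dS_primrec : Primrec dS := unpair2_primrec.comp (unpair2_primrec.comp tB_primrec)
lemma idx2_primrec : Primrec idx2 := Primrec₂.natPair.comp dA_primrec dB_primrec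
lemma P2_primrec : Primrec P2 :=
  Primrec.succ.comp (Primrec.list_length.comp ((Primrec.ofNat _).comp idx2_primrec))

lemma ok2_primrec : Primrec ok2 := by
  unfold ok2
  have h1 : Primrec fun n => Nat.pair (dA n) (Nat.pair (dB n) (preC (dA n) (dS n))) :=
    Primrec₂.natPair.comp dA_primrec
      (Primrec₂.natPair.comp dB_primrec (preC_primrec.comp dA_primrec dS_primrec))
  have h2 : Primrec fun n => Nat.pair (dA n) (Nat.pair (sR (dB n)) (dS n)) :=
    Primrec₂.natPair.comp dA_primrec
      (Primrec₂.natPair.comp (sR_primrec.comp dB_primrec) dS_primrec)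
  have h3 : Primrec fun n => Nat.pair (sR (dA n)) (Nat.pair (dB n) (dS n)) :=
    Primrec₂.natPair.comp (sR_primrec.comp dA_primrec)
      (Primrec₂.natPair.comp dB_primrec dS_primrec)
  exact Primrec.and.comp (Primrec.eq.comp tL_primrec h1).decide
    (Primrec.and.comp (Primrec.eq.comp tU_primrec h2).decide
      (Primrec.and.comp (Primrec.eq.comp tR_primrec h3).decide
        (Primrec.eq.comp (Primrec.list_length.comp ((Primrec.ofNat (List ℕ)).comp dS_primrec))
          (lenC_primrec.comp dA_primrec)).decide))

lemma iter_dl_primrec : Primrec₂ fun i j => dl^[j] i := by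
  have := Primrec.nat_iterate (f := fun p : ℕ × ℕ => p.2) (g := fun p : ℕ × ℕ => p.1)
    (h := fun (_ : ℕ × ℕ) (b : ℕ) => dl b)
    Primrec.snd Primrec.fst ((dl_primrec.comp Primrec.snd).to₂)
  exact this.to₂

lemma q2_primrec : Primrec q2 := by
  unfold q2
  have hmap : Primrec fun n => (List.range (P2 n)).map fun j => dl^[j] (idx2 n) := by
    apply Primrec.list_map (Primrec.list_range.comp P2_primrec)
    exact (iter_dl_primrec.comp (idx2_primrec.comp Primrec.fst) Primrec.snd).to₂
  exact Primrec.cond ok2_primrec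
    (Primrec.list_cons.comp dS_primrec
      (Primrec.list_cons.comp idx2_primrec
        (Primrec.list_append.comp hmap
          (Primrec.list_range.comp (Primrec.succ.comp idx2_primrec)))))
    (Primrec.const [])

lemma check2_primrec : Primrec₂ check2 := by
  unfold check2
  have hvs : Primrec fun p : ℕ × List ℕ => p.2 := Primrec.snd
  have hP2 : Primrec fun p : ℕ × List ℕ => P2 p.1 := P2_primrec.comp Primrec.fst
  have h0 : Primrec fun p : ℕ × List ℕ => decide (p.2.getD 0 0 = 1) :=
    (Primrec.eq.comp ((Primrec.list_getD 0).comp hvs (Primrec.const 0)) (Primrec.const 1)).decide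
  have h1 : Primrec fun p : ℕ × List ℕ => decide (p.2.getD 1 0 = 1) :=
    (Primrec.eq.comp ((Primrec.list_getD 0).comp hvs (Primrec.const 1)) (Primrec.const 1)).decide
  have h2 : Primrec fun p : ℕ × List ℕ =>
      (List.range (P2 p.1)).all fun j => decide (p.2.getD (2 + j) 0 = 1) := by
    apply list_all_primrec (Primrec.list_range.comp hP2)
    exact (Primrec.eq.comp
      ((Primrec.list_getD 0).comp (Primrec.snd.comp Primrec.fst)
        (Primrec.nat_add.comp (Primrec.const 2) Primrec.snd))
      (Primrec.const 1)).decide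
  have h3 : Primrec fun p : ℕ × List ℕ =>
      (List.range (idx2 p.1 + 1)).all fun j => decide (p.2.getD (2 + P2 p.1 + j) 0 ≤ 1) := by
    apply list_all_primrec
      (Primrec.list_range.comp (Primrec.succ.comp (idx2_primrec.comp Primrec.fst)))
    exact (Primrec.nat_le.comp
      ((Primrec.list_getD 0).comp (Primrec.snd.comp Primrec.fst)
        (Primrec.nat_add.comp
          (Primrec.nat_add.comp (Primrec.const 2) (hP2.comp Primrec.fst))
          Primrec.snd))
      (Primrec.const 1)).decide
  exact (Primrec.and.comp (ok2_primrec.comp Primrec.fst)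
    (Primrec.and.comp h0
      (Primrec.and.comp
        (Primrec.or.comp (Primrec.not.comp h1) h2) h3))).to₂

lemma out2_primrec : Primrec₂ out2 :=
  (Primrec.cond (check2_primrec.comp Primrec.fst Primrec.snd)
    (Primrec.const 1) (Primrec.const 0)).to₂

end TI

namespace TI

/-! ### the canonical tiles -/

def tileW (a b s : ℕ) : WangTile :=
  (Nat.pair a (Nat.pair b (preC a s)), Nat.pair a (Nat.pair (sR b) s),
   Nat.pair (sR a) (Nat.pair b s), Nat.pair a (Nat.pair b s))

lemma tileW_fields (a b s : ℕ) :
    tileLeft (tileW a b s) = Nat.pair a (Nat.pair b (preC a s)) ∧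
    tileUp (tileW a b s) = Nat.pair a (Nat.pair (sR b) s) ∧
    tileRight (tileW a b s) = Nat.pair (sR a) (Nat.pair b s) ∧
    tileBottom (tileW a b s) = Nat.pair a (Nat.pair b s) := by
  refine ⟨rfl, rfl, rfl, rfl⟩

lemma d_tileW (a b s : ℕ) :
    dA (Encodable.encode (tileW a b s)) = a ∧
    dB (Encodable.encode (tileW a b s)) = b ∧
    dS (Encodable.encode (tileW a b s)) = s := by
  have hb : tB (Encodable.encode (tileW a b s)) = Nat.pair a (Nat.pair b s) :=
    (tB_encode _).trans rfl
  unfold dA dB dS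
  rw [hb]
  simp [Nat.unpair_pair]

lemma ok2_tileW {a b s : ℕ}
    (hlen : (Denumerable.ofNat (List ℕ) s).length = lenC a) :
    ok2 (Encodable.encode (tileW a b s)) = true := by
  obtain ⟨hA, hB, hS⟩ := d_tileW a b s
  unfold ok2
  rw [hA, hB, hS, tL_encode, tU_encode, tR_encode]
  simp [tileW, tileLeft, tileUp, tileRight, hlen]

lemma ok2_dest {n : ℕ} (h : ok2 n = true) :
    Denumerable.ofNat WangTile n = tileW (dA n) (dB n) (dS n) ∧
    (Denumerable.ofNat (List ℕ) (dS n)).length = lenC (dA n) := by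
  unfold ok2 at h
  simp only [Bool.and_eq_true, decide_eq_true_eq] at h
  obtain ⟨h1, h2, h3, h4⟩ := h
  refine ⟨?_, h4⟩
  have hB : tB n = Nat.pair (dA n) (Nat.pair (dB n) (dS n)) := by
    unfold dA dB dS
    rw [Nat.pair_unpair, Nat.pair_unpair]
  set t := Denumerable.ofNat WangTile n with ht
  have hen : Encodable.encode t = n := Denumerable.encode_ofNat n
  have e1 : tileLeft t = tL n := by rw [← hen, tL_encode]
  have e2 : tileUp t = tU n := by rw [← hen, tU_encode]
  have e3 : tileRight t = tR n := by rw [← hen, tR_encode]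
  have e4 : tileBottom t = tB n := by rw [← hen, tB_encode]
  rcases t with ⟨w1, w2, w3, w4⟩
  simp only [tileLeft, tileUp, tileRight, tileBottom] at e1 e2 e3 e4
  unfold tileW
  rw [e1, e2, e3, e4, h1, h2, h3, hB]

/-! ### acceptance characterization -/

def Acc2 (e n : ℕ) : Prop :=
  (∀ m ∈ q2 n, (Phi e m).Dom) ∧ check2 n ((q2 n).map (pval e)) = true

lemma accept2_iff {r : ℕ → ℕ}
    (hspec : ∀ e n a, a ∈ Phi (r e) n ↔
      ((∀ m ∈ q2 n, (Phi e m).Dom) ∧ a = out2 n ((q2 n).map (pval e))))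
    (e n : ℕ) : 1 ∈ Phi (r e) n ↔ Acc2 e n := by
  rw [hspec e n 1]
  unfold Acc2 out2
  exact and_congr Iff.rfl cond_one_iff

lemma q2_of_ok {n : ℕ} (h : ok2 n = true) :
    q2 n = dS n :: idx2 n ::
      (((List.range (P2 n)).map fun j => dl^[j] (idx2 n)) ++ List.range (idx2 n + 1)) := by
  unfold q2
  rw [h, cond_true]

/-- detailed semantic content of acceptance, assuming the structural check holds -/
lemma acc2_detail {e n : ℕ} (hok : ok2 n = true) (hacc : Acc2 e n) :
    (∀ m ∈ q2 n, (Phi e m).Dom) ∧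
    pval e (dS n) = 1 ∧
    (pval e (idx2 n) = 1 → ∀ j < P2 n, pval e (dl^[j] (idx2 n)) = 1) ∧
    (∀ j ≤ idx2 n, pval e j ≤ 1) := by
  obtain ⟨hdom, hch⟩ := hacc
  unfold check2 at hch
  rw [q2_of_ok hok] at hch
  simp only [List.map_cons, List.map_append, List.map_map, Bool.and_eq_true,
    Bool.or_eq_true, Bool.not_eq_true', List.all_eq_true, List.mem_range,
    decide_eq_true_eq, decide_eq_false_iff_not] at hch
  obtain ⟨-, h0, h1, h2⟩ := hch
  set A := List.map (pval e ∘ fun j => dl^[j] (idx2 n)) (List.range (P2 n)) with hA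
  set B := List.map (pval e) (List.range (idx2 n + 1)) with hB
  have hlenA : A.length = P2 n := by simp [hA]
  refine ⟨hdom, by simpa using h0, ?_, ?_⟩
  · intro hpv j hj
    rcases h1 with h1 | h1
    · exact absurd (by simpa using hpv) h1
    · have hh := h1 j hj
      rw [show 2 + j = (j + 1) + 1 by omega, List.getD_cons_succ, List.getD_cons_succ,
        List.getD_append _ _ _ _ (by rw [hlenA]; exact hj), hA] at hh
      have := getD_map_range (p := pval e ∘ fun j => dl^[j] (idx2 n)) hj
      rw [this] at hh
      simpa using hh
  · intro j hj
    have hh := h2 j (by omega)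
    rw [show 2 + P2 n + j = ((P2 n + j) + 1) + 1 by omega, List.getD_cons_succ,
      List.getD_cons_succ, List.getD_append_right _ _ _ _ (by rw [hlenA]; omega),
      hlenA, show P2 n + j - P2 n = j by omega, hB,
      getD_map_range (p := pval e) (by omega : j < idx2 n + 1)] at hh
    exact hh

end TI

namespace TI

/-! ### list iteration lemmas -/

lemma iter_dl_encode (j : ℕ) : ∀ σ : List ℕ,
    dl^[j] (Encodable.encode σ) = Encodable.encode (List.dropLast^[j] σ) := by
  induction j with
  | zero => intro σ; rfl
  | succ j ih =>
    intro σ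
    rw [Function.iterate_succ_apply, Function.iterate_succ_apply, dl_encode, ih]

lemma dropLast_iter_prefix (σ : List ℕ) (j : ℕ) : List.dropLast^[j] σ <+: σ := by
  induction j with
  | zero => exact List.prefix_rfl
  | succ j ih =>
    rw [Function.iterate_succ_apply']
    exact (List.dropLast_prefix _).trans ih

lemma dropLast_iter_take (σ : List ℕ) (j : ℕ) :
    List.dropLast^[j] σ = σ.take (σ.length - j) := by
  induction j with
  | zero => simp
  | succ j ih =>
    rw [Function.iterate_succ_apply', ih, List.dropLast_eq_take, List.take_take,
      List.length_take]
    congr 1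
    omega

lemma eq_dropLast_append {l : List ℕ} {k : ℕ} (h : l.length = k + 1) :
    l = l.dropLast ++ [l.getD k 0] := by
  have hne : l ≠ [] := by intro h0; rw [h0] at h; simp at h
  conv_lhs => rw [← List.dropLast_append_getLast hne]
  congr 2
  rw [List.getLast_eq_getElem, List.getD_eq_getElem l 0 (by omega)]
  congr 1
  omega

lemma dropLast_map_range {p : ℕ → ℕ} {k : ℕ} :
    (List.map p (List.range (k + 1))).dropLast = List.map p (List.range k) := by
  rw [List.range_succ, List.map_append]
  simp

/-! ### the tiles built from a path -/

def paths (p : ℕ → ℕ) (x : ℤ) : ℕ := Encodable.encode (List.map p (List.range x.toNat))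

def ftile (p : ℕ → ℕ) (z : ℤ × ℤ) : WangTile := tileW (nOf z.1) (nOf z.2) (paths p z.1)

lemma ftile_len (p : ℕ → ℕ) (x : ℤ) :
    (Denumerable.ofNat (List ℕ) (paths p x)).length = lenC (nOf x) := by
  unfold paths
  rw [Denumerable.ofNat_encode, lenC_eq, zOf_nOf]
  simp

lemma npC_nOf_true {x : ℤ} (h : x ≤ 0) : npC (nOf x) = true := by
  rw [npC_iff, zOf_nOf]; exact h

lemma npC_nOf_false {x : ℤ} (h : 0 < x) : npC (nOf x) = false := by
  rw [Bool.eq_false_iff]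
  intro hh
  have := (npC_iff _).mp hh
  rw [zOf_nOf] at this
  omega

lemma ftile_horiz (p : ℕ → ℕ) (x y : ℤ) :
    tileRight (ftile p (x, y)) = tileLeft (ftile p (x + 1, y)) := by
  have hpre : preC (nOf (x + 1)) (paths p (x + 1)) = paths p x := by
    rcases le_or_gt (x + 1) 0 with h | h
    · rw [preC, npC_nOf_true h, cond_true]
      unfold paths
      have : x.toNat = 0 := by omega
      rw [this]
      rfl
    · rw [preC, npC_nOf_false h, cond_false]
      unfold paths
      rw [dl_encode]
      have h1 : (x + 1).toNat = x.toNat + 1 := by omega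
      rw [h1, dropLast_map_range]
  show Nat.pair (sR (nOf x)) (Nat.pair (nOf y) (paths p x))
    = Nat.pair (nOf (x+1)) (Nat.pair (nOf y) (preC (nOf (x+1)) (paths p (x+1))))
  rw [hpre, nOf_add_one]

lemma ftile_vert (p : ℕ → ℕ) (x y : ℤ) :
    tileUp (ftile p (x, y)) = tileBottom (ftile p (x, y + 1)) := by
  show Nat.pair (nOf x) (Nat.pair (sR (nOf y)) (paths p x))
    = Nat.pair (nOf x) (Nat.pair (nOf (y+1)) (paths p x))
  rw [nOf_add_one]

theorem dir2_forward {r : ℕ → ℕ}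
    (hspec : ∀ e n a, a ∈ Phi (r e) n ↔
      ((∀ m ∈ q2 n, (Phi e m).Dom) ∧ a = out2 n ((q2 n).map (pval e))))
    {e : ℕ} (he : e ∈ ILL) : r e ∈ TILE := by
  obtain ⟨htb, htree, p, hp⟩ := he
  have hdom : ∀ m, (Phi e m).Dom := totalBool_dom htb
  refine ⟨?_, fun z => ftile p z, ?_, ?_, ?_⟩
  · intro n
    refine ⟨out2 n ((q2 n).map (pval e)), (hspec e n _).mpr ⟨fun m _ => hdom m, rfl⟩, ?_⟩
    unfold out2
    cases check2 n ((q2 n).map (pval e)) <;> simp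
  · rintro ⟨x, y⟩ -
    show 1 ∈ Phi (r e) (Encodable.encode (ftile p (x, y)))
    rw [accept2_iff hspec]
    set n := Encodable.encode (ftile p (x, y)) with hn
    have hok : ok2 n = true := ok2_tileW (ftile_len p x)
    obtain ⟨hdA, hdB, hdS⟩ := d_tileW (nOf x) (nOf y) (paths p x)
    refine ⟨fun m _ => hdom m, ?_⟩
    have hdet : pval e (dS n) = 1 ∧
        (pval e (idx2 n) = 1 → ∀ j < P2 n, pval e (dl^[j] (idx2 n)) = 1) ∧
        (∀ j ≤ idx2 n, pval e j ≤ 1) := by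
      refine ⟨?_, ?_, ?_⟩
      · show pval e (dS (Encodable.encode (tileW (nOf x) (nOf y) (paths p x)))) = 1
        rw [hdS]
        exact pval_eq (hp x.toNat)
      · intro hpv j hj
        generalize hi' : idx2 n = i at hpv ⊢
        have hi : i = idx2 n := hi'.symm
        set τ := Denumerable.ofNat (List ℕ) i with hτ
        have henc : Encodable.encode τ = i := Denumerable.encode_ofNat i
        have hτT : τ ∈ TSet e := by
          show 1 ∈ Phi e (Encodable.encode τ)
          rw [henc, ← hpv]
          exact pval_mem (hdom i)
        have hpre : List.dropLast^[j] τ ∈ TSet e :=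
          htree τ hτT _ (dropLast_iter_prefix τ j)
        have : dl^[j] i = Encodable.encode (List.dropLast^[j] τ) := by
          rw [← henc, iter_dl_encode]
        rw [this]
        exact pval_eq hpre
      · intro j _
        obtain ⟨v, hv, hor⟩ := htb j
        rw [pval_eq hv]
        omega
    -- now rebuild check2
    obtain ⟨h0, h1, h2⟩ := hdet
    unfold check2
    rw [q2_of_ok hok]
    simp only [List.map_cons, List.map_append, List.map_map, Bool.and_eq_true,
      Bool.or_eq_true, Bool.not_eq_true', List.all_eq_true, List.mem_range,
      decide_eq_true_eq, decide_eq_false_iff_not]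
    set A := List.map (pval e ∘ fun j => dl^[j] (idx2 n)) (List.range (P2 n)) with hA
    have hlenA : A.length = P2 n := by simp [hA]
    refine ⟨hok, by simpa using h0, ?_, ?_⟩
    · by_cases hpv : pval e (idx2 n) = 1
      · right
        intro j hj
        rw [show 2 + j = (j + 1) + 1 by omega, List.getD_cons_succ, List.getD_cons_succ,
          List.getD_append _ _ _ _ (by rw [hlenA]; exact hj), hA,
          getD_map_range (p := pval e ∘ fun j => dl^[j] (idx2 n)) hj]
        simpa using h1 hpv j hj
      · left
        simpa using hpv
    · intro j hj
      rw [show 2 + P2 n + j = ((P2 n + j) + 1) + 1 by omega, List.getD_cons_succ,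
        List.getD_cons_succ, List.getD_append_right _ _ _ _ (by rw [hlenA]; omega),
        hlenA, show P2 n + j - P2 n = j by omega,
        getD_map_range (p := pval e) (by omega : j < idx2 n + 1)]
      exact h2 j (by omega)
  · intro x y _ _
    exact ftile_horiz p x y
  · intro x y _ _
    exact ftile_vert p x y

end TI

namespace TI

lemma int_vert_const {g : ℤ → ℕ} (h : ∀ y, g (y + 1) = g y) : ∀ y, g y = g 0 := by
  intro y
  induction y using Int.induction_on with
  | zero => rfl
  | succ k ih => rw [← ih]; exact h k
  | pred k ih =>
    have hh := h (-(k : ℤ) - 1)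
    rw [show (-(k : ℤ) - 1) + 1 = -(k : ℤ) by ring] at hh
    rw [← hh]
    exact ih

lemma int_affine {g : ℤ → ℤ} (h : ∀ x, g (x + 1) = g x + 1) : ∀ x, g x = x + g 0 := by
  intro x
  induction x using Int.induction_on with
  | zero => simp
  | succ k ih => rw [h k, ih]; ring
  | pred k ih =>
    have hh := h (-(k : ℤ) - 1)
    rw [show (-(k : ℤ) - 1) + 1 = -(k : ℤ) by ring] at hh
    have : g (-(k : ℤ) - 1) = g (-(k : ℤ)) - 1 := by omega
    rw [this, ih]
    ring

lemma acc2_ok {e n : ℕ} (h : Acc2 e n) : ok2 n = true := by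
  obtain ⟨-, hch⟩ := h
  unfold check2 at hch
  simp only [Bool.and_eq_true] at hch
  exact hch.1

theorem dir2_backward {r : ℕ → ℕ}
    (hspec : ∀ e n a, a ∈ Phi (r e) n ↔
      ((∀ m ∈ q2 n, (Phi e m).Dom) ∧ a = out2 n ((q2 n).map (pval e))))
    {e : ℕ} (he : r e ∈ TILE) : e ∈ ILL := by
  obtain ⟨htb2, f, hfS, hfH, hfV⟩ := he
  set N : ℤ × ℤ → ℕ := fun z => Encodable.encode (f z) with hN
  have hacc : ∀ z, Acc2 e (N z) :=
    fun z => (accept2_iff hspec e (N z)).mp (hfS z (Set.mem_univ z))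
  have hok : ∀ z, ok2 (N z) = true := fun z => acc2_ok (hacc z)
  set A : ℤ × ℤ → ℕ := fun z => dA (N z) with hA
  set B : ℤ × ℤ → ℕ := fun z => dB (N z) with hB
  set S : ℤ × ℤ → ℕ := fun z => dS (N z) with hS
  have hstruct : ∀ z, f z = tileW (A z) (B z) (S z) := by
    intro z
    have := (ok2_dest (hok z)).1
    rwa [hN, Denumerable.ofNat_encode] at this
  have hlen : ∀ z, (Denumerable.ofNat (List ℕ) (S z)).length = lenC (A z) :=
    fun z => (ok2_dest (hok z)).2
  -- matching equations
  have hmatchH : ∀ x y : ℤ, A (x + 1, y) = sR (A (x, y)) ∧ B (x + 1, y) = B (x, y) ∧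
      preC (A (x + 1, y)) (S (x + 1, y)) = S (x, y) := by
    intro x y
    have hh := hfH x y (Set.mem_univ _) (Set.mem_univ _)
    rw [hstruct (x, y), hstruct (x + 1, y)] at hh
    simp only [tileW, tileRight, tileLeft] at hh
    obtain ⟨h1, h2⟩ := Nat.pair_eq_pair.mp hh
    obtain ⟨h3, h4⟩ := Nat.pair_eq_pair.mp h2
    exact ⟨h1.symm, h3.symm, h4.symm⟩
  have hmatchV : ∀ x y : ℤ, A (x, y + 1) = A (x, y) ∧ B (x, y + 1) = sR (B (x, y)) ∧
      S (x, y + 1) = S (x, y) := by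
    intro x y
    have hh := hfV x y (Set.mem_univ _) (Set.mem_univ _)
    rw [hstruct (x, y), hstruct (x, y + 1)] at hh
    simp only [tileW, tileUp, tileBottom] at hh
    obtain ⟨h1, h2⟩ := Nat.pair_eq_pair.mp hh
    obtain ⟨h3, h4⟩ := Nat.pair_eq_pair.mp h2
    exact ⟨h1.symm, h3.symm, h4.symm⟩
  -- A depends only on x, B only on y
  have hAvert : ∀ x y, A (x, y) = A (x, 0) :=
    fun x => int_vert_const (fun y => (hmatchV x y).1)
  have hBhoriz : ∀ x y, B (x, y) = B (0, y) := by
    intro x y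
    exact int_vert_const (g := fun x => B (x, y)) (fun x => (hmatchH x y).2.1) x
  set α : ℤ → ℕ := fun x => A (x, 0) with hα
  set β : ℤ → ℕ := fun y => B (0, y) with hβ
  have hαaff : ∀ x, zOf (α x) = x + zOf (α 0) := by
    apply int_affine (g := fun x => zOf (α x))
    intro x
    show zOf (A (x + 1, 0)) = zOf (A (x, 0)) + 1
    rw [(hmatchH x 0).1, zOf_sR]
  have hβaff : ∀ y, zOf (β y) = y + zOf (β 0) := by
    apply int_affine (g := fun y => zOf (β y))
    intro y
    show zOf (B (0, y + 1)) = zOf (B (0, y)) + 1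
    rw [(hmatchV 0 y).2.1, zOf_sR]
  have hαsurj : ∀ u : ℕ, ∃ x, α x = u := by
    intro u
    refine ⟨zOf u - zOf (α 0), zOf_injective ?_⟩
    rw [hαaff]
    ring
  have hβsurj : ∀ v : ℕ, ∃ y, β y = v := by
    intro v
    refine ⟨zOf v - zOf (β 0), zOf_injective ?_⟩
    rw [hβaff]
    ring
  have hcover : ∀ m : ℕ, ∃ z : ℤ × ℤ, idx2 (N z) = m := by
    intro m
    obtain ⟨x, hx⟩ := hαsurj m.unpair.1
    obtain ⟨y, hy⟩ := hβsurj m.unpair.2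
    refine ⟨(x, y), ?_⟩
    show Nat.pair (A (x, y)) (B (x, y)) = m
    rw [hAvert x y, hBhoriz x y]
    show Nat.pair (α x) (β y) = m
    rw [hx, hy, Nat.pair_unpair]
  have hdetail : ∀ z, pval e (dS (N z)) = 1 ∧
      (pval e (idx2 (N z)) = 1 → ∀ j < P2 (N z), pval e (dl^[j] (idx2 (N z))) = 1) ∧
      (∀ j ≤ idx2 (N z), pval e j ≤ 1) :=
    fun z => (acc2_detail (hok z) (hacc z)).2
  have hdomq : ∀ z, ∀ m ∈ q2 (N z), (Phi e m).Dom := fun z => (hacc z).1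
  have hmemsweep : ∀ z, ∀ j ≤ idx2 (N z), j ∈ q2 (N z) := by
    intro z j hj
    rw [q2_of_ok (hok z)]
    exact List.mem_cons_of_mem _ (List.mem_cons_of_mem _
      (List.mem_append_right _ (List.mem_range.mpr (by omega))))
  have hmempfx : ∀ z, ∀ j < P2 (N z), dl^[j] (idx2 (N z)) ∈ q2 (N z) := by
    intro z j hj
    rw [q2_of_ok (hok z)]
    exact List.mem_cons_of_mem _ (List.mem_cons_of_mem _
      (List.mem_append_left _ (List.mem_map.mpr ⟨j, List.mem_range.mpr hj, rfl⟩)))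
  -- totality and boolean-valuedness of e
  have htot : ∀ m, (Phi e m).Dom := by
    intro m
    obtain ⟨z, hz⟩ := hcover m
    exact hdomq z m (hmemsweep z m (le_of_eq hz.symm))
  have htb : PhiTotalBool e := by
    intro m
    obtain ⟨z, hz⟩ := hcover m
    have := (hdetail z).2.2 m (le_of_eq hz.symm)
    exact ⟨pval e m, pval_mem (htot m), by omega⟩
  refine ⟨htb, ?_, ?_⟩
  · -- IsTree
    intro σ hσ τ hτ
    obtain ⟨z, hz⟩ := hcover (Encodable.encode σ)
    have hP : P2 (N z) = σ.length + 1 := by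
      unfold P2
      rw [hz, Denumerable.ofNat_encode]
    have hpv : pval e (idx2 (N z)) = 1 := by
      rw [hz]
      exact pval_eq hσ
    have hj : σ.length - τ.length < P2 (N z) := by rw [hP]; omega
    have h1 := (hdetail z).2.1 hpv (σ.length - τ.length) hj
    have hτlen : τ.length ≤ σ.length := hτ.length_le
    have hexp : dl^[σ.length - τ.length] (idx2 (N z)) = Encodable.encode τ := by
      rw [hz, iter_dl_encode, dropLast_iter_take,
        show σ.length - (σ.length - τ.length) = τ.length by omega,
        ← List.prefix_iff_eq_take.mp hτ]
    rw [hexp] at h1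
    show 1 ∈ Phi e (Encodable.encode τ)
    have hd : (Phi e (Encodable.encode τ)).Dom := htot _
    rw [← h1]
    exact pval_mem hd
  · -- IllFounded
    set xn : ℕ → ℤ := fun k => (k : ℤ) - zOf (α 0) with hxn
    have hxa : ∀ k : ℕ, zOf (α (xn k)) = (k : ℤ) := by
      intro k
      rw [hαaff]
      simp [hxn]
    set Sk : ℕ → ℕ := fun k => S (xn k, 0) with hSk
    set σk : ℕ → List ℕ := fun k => Denumerable.ofNat (List ℕ) (Sk k) with hσk
    have hlenk : ∀ k, (σk k).length = k := by
      intro k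
      show (Denumerable.ofNat (List ℕ) (S (xn k, 0))).length = k
      rw [hlen (xn k, 0)]
      have : lenC (A (xn k, 0)) = (zOf (α (xn k))).toNat := lenC_eq _
      rw [this, hxa]
      simp
    have hstep : ∀ k, σk k = (σk (k + 1)).dropLast := by
      intro k
      have hx1 : xn k + 1 = xn (k + 1) := by
        rw [hxn]
        push_cast
        ring
      have hm := (hmatchH (xn k) 0).2.2
      rw [hx1] at hm
      have hnp : npC (A (xn (k + 1), 0)) = false := by
        rw [Bool.eq_false_iff]
        intro hh
        have := (npC_iff _).mp hh
        have hz := hxa (k + 1)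
        rw [show α (xn (k+1)) = A (xn (k+1), 0) from rfl] at hz
        rw [hz] at this
        push_cast at this
        omega
      rw [preC, hnp, cond_false, dl_eq] at hm
      show Denumerable.ofNat (List ℕ) (S (xn k, 0)) = _
      rw [← hm, Denumerable.ofNat_encode]
    set pth : ℕ → ℕ := fun k => (σk (k + 1)).getD k 0 with hpth
    have hclaim : ∀ k, List.map pth (List.range k) = σk k := by
      intro k
      induction k with
      | zero =>
        have : (σk 0).length = 0 := hlenk 0
        rw [List.length_eq_zero_iff] at this
        rw [this]
        rfl
      | succ k ih =>
        rw [List.range_succ, List.map_append, ih]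
        have hd := eq_dropLast_append (l := σk (k + 1)) (k := k) (hlenk (k + 1))
        rw [← hstep k] at hd
        exact hd.symm
    refine ⟨pth, fun k => ?_⟩
    rw [hclaim k]
    show 1 ∈ Phi e (Encodable.encode (σk k))
    have : Encodable.encode (σk k) = Sk k := Denumerable.encode_ofNat _
    rw [this]
    have h0 := (hdetail (xn k, 0)).1
    rw [← h0]
    exact pval_mem (htot _)

theorem ill_le_tile : (· ∈ ILL) ≤₀ (· ∈ TILE) := by
  obtain ⟨r, hr, hspec⟩ := exists_reduction q2_primrec out2_primrec
  exact ⟨r, hr, fun e => ⟨fun h => dir2_forward hspec h, fun h => dir2_backward hspec h⟩⟩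

end TI

/-- `TILE ≡_m ILL`. -/
theorem TILE_manyOneEquiv_ILL :
    (· ∈ TILE) ≤₀ (· ∈ ILL) ∧ (· ∈ ILL) ≤₀ (· ∈ TILE) := by
  exact ⟨TI.tile_le_ill, TI.ill_le_tile⟩
end

section
/- (¬TILE) ≡_m WELL, that is, (¬TILE) ≤_m WELL and WELL ≤_m (¬TILE). -/
def NTILE : Set ℕ :=
  {e | PhiTotalBool e ∧ ¬ ∃ f : ℤ × ℤ → WangTile, IsTiling (PhiTileSet e) Set.univ f}

def WELL : Set ℕ := {e | PhiTotalBool e ∧ IsTree (TSet e) ∧ ¬ IllFounded (TSet e)}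



namespace WangRed

open Nat.Partrec (Code)
open Nat.Partrec.Code

/-! ### Integer coding -/

def zenc : ℤ → ℕ
  | Int.ofNat n => 2 * n
  | Int.negSucc n => 2 * n + 1

def zdec (c : ℕ) : ℤ := if c % 2 = 0 then ((c / 2 : ℕ) : ℤ) else -(((c / 2 : ℕ) : ℤ) + 1)

def zsucc (c : ℕ) : ℕ := if c % 2 = 0 then c + 2 else c - 2

theorem zdec_zenc (z : ℤ) : zdec (zenc z) = z := by
  cases z with
  | ofNat n =>
      have h1 : (2 * n) % 2 = 0 := by omega
      have h2 : (2 * n) / 2 = n := by omega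
      show zdec (2 * n) = Int.ofNat n
      rw [zdec, if_pos h1, h2]; rfl
  | negSucc n =>
      have h1 : ¬((2 * n + 1) % 2 = 0) := by omega
      have h2 : (2 * n + 1) / 2 = n := by omega
      show zdec (2 * n + 1) = Int.negSucc n
      rw [zdec, if_neg h1, h2, Int.negSucc_eq]

theorem zenc_zdec (c : ℕ) : zenc (zdec c) = c := by
  by_cases h : c % 2 = 0
  · have : zdec c = Int.ofNat (c / 2) := by rw [zdec, if_pos h]; rfl
    rw [this]; show 2 * (c / 2) = c; omega
  · have : zdec c = Int.negSucc (c / 2) := by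
      rw [zdec, if_neg h, Int.negSucc_eq]
    rw [this]; show 2 * (c / 2) + 1 = c; omega

theorem zenc_inj {z w : ℤ} (h : zenc z = zenc w) : z = w := by
  have := congrArg zdec h; rwa [zdec_zenc, zdec_zenc] at this

theorem zenc_succ (z : ℤ) : zenc (z + 1) = zsucc (zenc z) := by
  cases z with
  | ofNat n =>
      have : (Int.ofNat n) + 1 = Int.ofNat (n + 1) := rfl
      rw [this]
      show 2 * (n + 1) = zsucc (2 * n)
      rw [zsucc, if_pos (by omega)]; omega
  | negSucc n =>
      cases n with
      | zero =>
          have : (Int.negSucc 0) + 1 = Int.ofNat 0 := rfl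
          rw [this]
          show 2 * 0 = zsucc (2 * 0 + 1)
          rw [zsucc, if_neg (by omega)]
      | succ m =>
          have : (Int.negSucc (m + 1)) + 1 = Int.negSucc m := by
            rw [Int.negSucc_eq, Int.negSucc_eq]; push_cast; ring
          rw [this]
          show 2 * m + 1 = zsucc (2 * (m + 1) + 1)
          rw [zsucc, if_neg (by omega)]; omega

theorem zdec_succ (c : ℕ) : zdec (zsucc c) = zdec c + 1 := by
  conv_lhs => rw [← zenc_zdec c]
  rw [← zenc_succ, zdec_zenc]

theorem zdec_nonneg_iff (c : ℕ) : 0 ≤ zdec c ↔ c % 2 = 0 := by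
  by_cases h : c % 2 = 0
  · have : zdec c = Int.ofNat (c / 2) := by rw [zdec, if_pos h]; rfl
    rw [this]
    exact iff_of_true (Int.natCast_nonneg _) h
  · have : zdec c = Int.negSucc (c / 2) := by rw [zdec, if_neg h, Int.negSucc_eq]
    rw [this]
    simp only [h, iff_false]
    rw [Int.negSucc_eq]; omega

theorem zdec_toNat_even {c : ℕ} (h : c % 2 = 0) : (zdec c).toNat = c / 2 := by
  rw [zdec, if_pos h, Int.toNat_natCast]

theorem zenc_even_of_nonneg {z : ℤ} (h : 0 ≤ z) : zenc z % 2 = 0 := by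
  cases z with
  | ofNat n => show (2 * n) % 2 = 0; omega
  | negSucc n => rw [Int.negSucc_eq] at h; omega

theorem zenc_odd_of_neg {z : ℤ} (h : z < 0) : zenc z % 2 ≠ 0 := by
  cases z with
  | ofNat n =>
      exfalso
      have : (0 : ℤ) ≤ Int.ofNat n := Int.natCast_nonneg n
      omega
  | negSucc n => show ¬((2 * n + 1) % 2 = 0); omega

theorem zenc_toNat_div {z : ℤ} (h : 0 ≤ z) : zenc z / 2 = z.toNat := by
  cases z with
  | ofNat n =>
      show (2 * n) / 2 = (Int.ofNat n).toNat
      have : (Int.ofNat n).toNat = n := rfl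
      rw [this]; omega
  | negSucc n => rw [Int.negSucc_eq] at h; exfalso; omega

theorem Primrec.zsucc : Primrec zsucc := by
  unfold WangRed.zsucc
  exact Primrec.ite
    (Primrec.eq.comp (Primrec.nat_mod.comp .id (Primrec.const 2)) (Primrec.const 0))
    (Primrec.nat_add.comp .id (Primrec.const 2))
    (Primrec.nat_sub.comp .id (Primrec.const 2))

/-! ### Generic oracle-query machinery -/

def cde (e : ℕ) : Code := Denumerable.ofNat Code e

theorem Phi_eq (e : ℕ) : Phi e = (cde e).eval := rfl

def qhalt (Q : ℕ → List ℕ) (a : ℕ × ℕ) (s : ℕ) : Bool :=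
  (Q a.2).all fun m => (evaln s (cde a.1) m).isSome

def hout (Q : ℕ → List ℕ) (P : ℕ → List ℕ → ℕ) (a : ℕ × ℕ) (s : ℕ) : ℕ :=
  P a.2 ((Q a.2).map fun m => (evaln s (cde a.1) m).getD 0)

def HH (Q : ℕ → List ℕ) (P : ℕ → List ℕ → ℕ) (e n : ℕ) : Part ℕ :=
  (Nat.rfind fun s => Part.some (qhalt Q (e, n) s)).map (hout Q P (e, n))

theorem list_all_primrec {α β} [Primcodable α] [Primcodable β] {f : α → List β}
    {p : α → β → Bool} (hf : Primrec f) (hp : Primrec₂ p) :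
    Primrec fun a => (f a).all (p a) := by
  have h : Primrec fun a => (f a).foldr (fun b s => p a b && s) true :=
    Primrec.list_foldr hf (Primrec.const true)
      (((Primrec.dom_bool₂ (· && ·)).comp
        (hp.comp Primrec.fst (Primrec.fst.comp Primrec.snd))
        (Primrec.snd.comp Primrec.snd)).to₂)
  refine h.of_eq fun a => ?_
  induction f a with
  | nil => rfl
  | cons b l ih => simp [List.all_cons, ih]

theorem qhalt_primrec {Q : ℕ → List ℕ} (hQ : Primrec Q) : Primrec₂ (qhalt Q) := by
  have h : Primrec fun pr : (ℕ × ℕ) × ℕ =>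
      (Q pr.1.2).all fun m => (evaln pr.2 (cde pr.1.1) m).isSome :=
    list_all_primrec (hQ.comp (Primrec.snd.comp Primrec.fst))
      ((Primrec.option_isSome.comp (primrec_evaln.comp
        (((Primrec.snd.comp Primrec.fst).pair
          ((Primrec.ofNat Code).comp
            (Primrec.fst.comp (Primrec.fst.comp Primrec.fst)))).pair Primrec.snd))).to₂)
  exact h

theorem hout_primrec {Q : ℕ → List ℕ} {P : ℕ → List ℕ → ℕ}
    (hQ : Primrec Q) (hP : Primrec₂ P) : Primrec₂ (hout Q P) := by
  have hmap : Primrec fun pr : (ℕ × ℕ) × ℕ =>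
      (Q pr.1.2).map fun m => (evaln pr.2 (cde pr.1.1) m).getD 0 :=
    Primrec.list_map (hQ.comp (Primrec.snd.comp Primrec.fst))
      ((Primrec.option_getD.comp (primrec_evaln.comp
        (((Primrec.snd.comp Primrec.fst).pair
          ((Primrec.ofNat Code).comp
            (Primrec.fst.comp (Primrec.fst.comp Primrec.fst)))).pair Primrec.snd))
        (Primrec.const 0)).to₂)
  have h : Primrec fun pr : (ℕ × ℕ) × ℕ =>
      P pr.1.2 ((Q pr.1.2).map fun m => (evaln pr.2 (cde pr.1.1) m).getD 0) :=
    hP.comp (Primrec.snd.comp Primrec.fst) hmap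
  exact h

theorem HH_partrec {Q : ℕ → List ℕ} {P : ℕ → List ℕ → ℕ}
    (hQ : Primrec Q) (hP : Primrec₂ P) : Partrec₂ (HH Q P) := by
  have h1 : Partrec fun a : ℕ × ℕ => Nat.rfind fun s => Part.some (qhalt Q a s) :=
    Partrec.rfind ((qhalt_primrec hQ).to_comp.partrec₂)
  exact (h1.map (hout_primrec hQ hP).to_comp).of_eq fun a => by
    simp [HH]

theorem exists_stage {e : ℕ} : ∀ l : List ℕ, (∀ m ∈ l, (Phi e m).Dom) →
    ∃ s, ∀ m ∈ l, (evaln s (cde e) m).isSome = true := by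
  intro l
  induction l with
  | nil => exact fun _ => ⟨0, by simp⟩
  | cons a l ih =>
      intro h
      obtain ⟨s, hs⟩ := ih fun m hm => h m (List.mem_cons_of_mem _ hm)
      have ha : (Phi e a).Dom := h a (List.mem_cons_self)
      obtain ⟨v, hv⟩ := Part.dom_iff_mem.1 ha
      rw [Phi_eq] at hv
      obtain ⟨k, hk⟩ := evaln_complete.1 hv
      refine ⟨max s k, fun m hm => ?_⟩
      rcases List.mem_cons.1 hm with rfl | hm
      · exact Option.isSome_iff_exists.2 ⟨v, evaln_mono (le_max_right _ _) hk⟩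
      · obtain ⟨w, hw⟩ := Option.isSome_iff_exists.1 (hs m hm)
        exact Option.isSome_iff_exists.2 ⟨w, evaln_mono (le_max_left _ _) hw⟩

theorem HH_dom_iff {Q : ℕ → List ℕ} {P : ℕ → List ℕ → ℕ} {e n : ℕ} :
    (HH Q P e n).Dom ↔ ∀ m ∈ Q n, (Phi e m).Dom := by
  constructor
  · intro h
    obtain ⟨v, hv⟩ := Part.dom_iff_mem.1 h
    obtain ⟨s, hs, -⟩ := (Part.mem_map_iff _).1 hv
    have := Nat.rfind_spec hs
    rw [Part.mem_some_iff] at this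
    intro m hm
    have h2 := List.all_eq_true.1 this.symm m hm
    obtain ⟨w, hw⟩ := Option.isSome_iff_exists.1 h2
    rw [Phi_eq]
    exact Part.dom_iff_mem.2 ⟨w, evaln_sound hw⟩
  · intro h
    obtain ⟨s, hs⟩ := exists_stage (Q n) h
    have : (Nat.rfind fun s => Part.some (qhalt Q (e, n) s)).Dom := by
      refine Nat.rfind_dom.2 ⟨s, ?_, fun {m} _ => trivial⟩
      rw [Part.mem_some_iff]
      exact (List.all_eq_true.2 fun m hm => hs m hm).symm
    exact this

theorem HH_eq {Q : ℕ → List ℕ} {P : ℕ → List ℕ → ℕ} {e n : ℕ} (χ : ℕ → ℕ)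
    (hχ : ∀ m ∈ Q n, Phi e m = Part.some (χ m)) :
    HH Q P e n = Part.some (P n ((Q n).map χ)) := by
  have hdom : (HH Q P e n).Dom :=
    HH_dom_iff.2 fun m hm => by rw [hχ m hm]; trivial
  have hrdom : (Nat.rfind fun s => Part.some (qhalt Q (e, n) s)).Dom := by
    obtain ⟨v, hv⟩ := Part.dom_iff_mem.1 hdom
    obtain ⟨s, hs, -⟩ := (Part.mem_map_iff _).1 hv
    exact Part.dom_iff_mem.2 ⟨s, hs⟩
  obtain ⟨s, hs⟩ := Part.dom_iff_mem.1 hrdom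
  have hall := Nat.rfind_spec hs
  rw [Part.mem_some_iff] at hall
  have hmap : (Q n).map (fun m => (evaln s (cde e) m).getD 0) = (Q n).map χ := by
    refine List.map_congr_left fun m hm => ?_
    have h2 := List.all_eq_true.1 hall.symm m hm
    obtain ⟨w, hw⟩ := Option.isSome_iff_exists.1 h2
    have : w ∈ Phi e m := by rw [Phi_eq]; exact evaln_sound hw
    rw [hχ m hm, Part.mem_some_iff] at this
    rw [hw]; simpa using this
  refine Part.eq_some_iff.2 ?_
  refine (Part.mem_map_iff _).2 ⟨s, hs, ?_⟩
  simp [hout, hmap]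

/-! ### Index construction -/

theorem exists_index {H : ℕ → ℕ →. ℕ} (h : Partrec₂ H) :
    ∃ g : ℕ → ℕ, Computable g ∧ ∀ e n, Phi (g e) n = H e n := by
  have h' : Partrec fun m : ℕ => H m.unpair.1 m.unpair.2 := by
    exact h.comp ((Primrec.fst.comp Primrec.unpair).to_comp)
      ((Primrec.snd.comp Primrec.unpair).to_comp)
  obtain ⟨c, hc⟩ := exists_code.1 (Partrec.nat_iff.1 h')
  obtain ⟨sf, sfc, hsf⟩ := smn
  refine ⟨fun e => Encodable.encode (sf c e), ?_, fun e n => ?_⟩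
  · exact Computable.encode.comp (sfc.comp (Computable.const c) Computable.id)
  · show Phi (Encodable.encode (sf c e)) n = H e n
    unfold Phi
    rw [Denumerable.ofNat_encode, hsf, hc]
    simp

/-! ### Helpers about `PhiTotalBool` -/

theorem phiTotalBool_elim {e : ℕ} (h : PhiTotalBool e) :
    ∃ χ : ℕ → ℕ, (∀ m, Phi e m = Part.some (χ m)) ∧ ∀ m, χ m < 2 := by
  classical
  refine ⟨fun m => (h m).choose, fun m => ?_, fun m => ?_⟩
  · exact (Part.eq_some_iff.2 (h m).choose_spec.1)
  · show (h m).choose < 2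
    rcases (h m).choose_spec.2 with h' | h' <;> omega

theorem not_totalBool_of_some7 {e n : ℕ} (hn : Phi e n = Part.some 7) : ¬ PhiTotalBool e := by
  intro h
  obtain ⟨v, hv, hb⟩ := h n
  rw [hn, Part.mem_some_iff] at hv
  omega

theorem not_totalBool_of_not_dom {e n : ℕ} (hn : ¬(Phi e n).Dom) : ¬ PhiTotalBool e := by
  intro h
  obtain ⟨v, hv, -⟩ := h n
  exact hn (Part.dom_iff_mem.2 ⟨v, hv⟩)

theorem TSet_mem_iff {e : ℕ} {χ : ℕ → ℕ} (hχ : ∀ m, Phi e m = Part.some (χ m))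
    (σ : List ℕ) : σ ∈ TSet e ↔ χ (Encodable.encode σ) = 1 := by
  unfold TSet
  rw [Set.mem_setOf_eq, hχ, Part.mem_some_iff, eq_comm]

theorem tile_mem_iff {e : ℕ} {χ : ℕ → ℕ} (hχ : ∀ m, Phi e m = Part.some (χ m))
    (t : WangTile) : t ∈ PhiTileSet e ↔ χ (Encodable.encode t) = 1 := by
  unfold PhiTileSet
  rw [Set.mem_setOf_eq, hχ, Part.mem_some_iff, eq_comm]

/-! ### Direction 1: NTILE ≤ WELL -/

def tdec (m : ℕ) : WangTile := Denumerable.ofNat WangTile m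
def ldec (m : ℕ) : List ℕ := Denumerable.ofNat (List ℕ) m

def hcond (i j : ℕ) : Prop :=
  (Nat.unpair j).1 = zsucc (Nat.unpair i).1 ∧ (Nat.unpair j).2 = (Nat.unpair i).2

def vcond (i j : ℕ) : Prop :=
  (Nat.unpair j).1 = (Nat.unpair i).1 ∧ (Nat.unpair j).2 = zsucc (Nat.unpair i).2

instance (i j : ℕ) : Decidable (hcond i j) := by unfold hcond; infer_instance

instance (i j : ℕ) : Decidable (vcond i j) := by unfold vcond; infer_instance

def adjP (σ : List ℕ) : Prop := ∀ i < σ.length, ∀ j < σ.length,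
  (hcond i j → tileRight (tdec (σ.getD i 0)) = tileLeft (tdec (σ.getD j 0))) ∧
  (vcond i j → tileUp (tdec (σ.getD i 0)) = tileBottom (tdec (σ.getD j 0)))

def bigB (σ : List ℕ) : Bool :=
  (List.range σ.length).all fun i => (List.range σ.length).all fun j =>
    (!(decide (hcond i j)) ||
      (tileRight (tdec (σ.getD i 0)) == tileLeft (tdec (σ.getD j 0)))) &&
    (!(decide (vcond i j)) ||
      (tileUp (tdec (σ.getD i 0)) == tileBottom (tdec (σ.getD j 0))))

theorem bigB_iff (σ : List ℕ) : bigB σ = true ↔ adjP σ := by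
  unfold bigB adjP
  simp only [List.all_eq_true, List.mem_range, Bool.and_eq_true, Bool.or_eq_true,
    Bool.not_eq_true', decide_eq_false_iff_not, beq_iff_eq]
  constructor
  · intro h i hi j hj
    rcases h i hi j hj with ⟨h1, h2⟩
    constructor
    · intro hc
      rcases h1 with h1 | h1
      · exact absurd hc h1
      · exact h1
    · intro hc
      rcases h2 with h2 | h2
      · exact absurd hc h2
      · exact h2
  · intro h i hi j hj
    rcases h i hi j hj with ⟨h1, h2⟩
    constructor
    · by_cases hc : hcond i j
      · exact Or.inr (h1 hc)
      · exact Or.inl hc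
    · by_cases hc : vcond i j
      · exact Or.inr (h2 hc)
      · exact Or.inl hc

def Q1 (n : ℕ) : List ℕ := ldec n

def P1 (n : ℕ) (vs : List ℕ) : ℕ :=
  cond (vs.all fun v => decide (v < 2))
    (cond ((vs.all fun v => v == 1) && bigB (ldec n)) 1 0) 7

theorem P1_seven {n : ℕ} {vs : List ℕ} (h : ∃ v ∈ vs, 2 ≤ v) : P1 n vs = 7 := by
  obtain ⟨v, hv, h2⟩ := h
  have : (vs.all fun v => decide (v < 2)) = false := by
    rw [Bool.eq_false_iff]
    intro hall
    have := List.all_eq_true.1 hall v hv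
    simp at this; omega
  rw [P1, this]; rfl

theorem P1_bool {n : ℕ} {vs : List ℕ} (h : ∀ v ∈ vs, v < 2) :
    P1 n vs = 0 ∨ P1 n vs = 1 := by
  have hall : (vs.all fun v => decide (v < 2)) = true :=
    List.all_eq_true.2 fun v hv => by simpa using h v hv
  rw [P1, hall]
  cases (vs.all fun v => v == 1) && bigB (ldec n) <;> simp

theorem P1_eq_one_iff {n : ℕ} {vs : List ℕ} (h : ∀ v ∈ vs, v < 2) :
    P1 n vs = 1 ↔ ((∀ v ∈ vs, v = 1) ∧ adjP (ldec n)) := by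
  have hall : (vs.all fun v => decide (v < 2)) = true :=
    List.all_eq_true.2 fun v hv => by simpa using h v hv
  rw [P1, hall]
  simp only [Bool.cond_true]
  constructor
  · intro h1
    have hb : ((vs.all fun v => v == 1) && bigB (ldec n)) = true := by
      by_contra hb
      rw [Bool.not_eq_true] at hb
      rw [hb] at h1
      simp at h1
    rw [Bool.and_eq_true] at hb
    exact ⟨fun v hv => by simpa using List.all_eq_true.1 hb.1 v hv, (bigB_iff _).1 hb.2⟩
  · rintro ⟨h1, h2⟩
    have hb : ((vs.all fun v => v == 1) && bigB (ldec n)) = true := by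
      rw [Bool.and_eq_true]
      exact ⟨List.all_eq_true.2 fun v hv => by simpa using h1 v hv, (bigB_iff _).2 h2⟩
    rw [hb]; rfl

theorem Q1_primrec : Primrec Q1 := Primrec.ofNat (List ℕ)

theorem tileLeft_primrec : Primrec tileLeft := Primrec.fst
theorem tileUp_primrec : Primrec tileUp := Primrec.fst.comp Primrec.snd
theorem tileRight_primrec : Primrec tileRight :=
  Primrec.fst.comp (Primrec.snd.comp Primrec.snd)
theorem tileBottom_primrec : Primrec tileBottom :=
  Primrec.snd.comp (Primrec.snd.comp Primrec.snd)

theorem hcond_primrec : PrimrecRel hcond := by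
  unfold hcond
  exact PrimrecPred.and
    (Primrec.eq.comp (Primrec.fst.comp (Primrec.unpair.comp Primrec.snd))
      (Primrec.zsucc.comp (Primrec.fst.comp (Primrec.unpair.comp Primrec.fst))))
    (Primrec.eq.comp (Primrec.snd.comp (Primrec.unpair.comp Primrec.snd))
      (Primrec.snd.comp (Primrec.unpair.comp Primrec.fst)))

theorem vcond_primrec : PrimrecRel vcond := by
  unfold vcond
  exact PrimrecPred.and
    (Primrec.eq.comp (Primrec.fst.comp (Primrec.unpair.comp Primrec.snd))
      (Primrec.fst.comp (Primrec.unpair.comp Primrec.fst)))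
    (Primrec.eq.comp (Primrec.snd.comp (Primrec.unpair.comp Primrec.snd))
      (Primrec.zsucc.comp (Primrec.snd.comp (Primrec.unpair.comp Primrec.fst))))

theorem bigB_primrec : Primrec bigB := by
  have htile : ∀ (sel : WangTile → ℕ), Primrec sel →
      Primrec fun x : (List ℕ × ℕ) × ℕ => sel (tdec (x.1.1.getD x.1.2 0)) := by
    intro sel hsel
    exact hsel.comp ((Primrec.ofNat WangTile).comp
      ((Primrec.list_getD 0).comp (Primrec.fst.comp Primrec.fst)
        (Primrec.snd.comp Primrec.fst)))
  have htile' : ∀ (sel : WangTile → ℕ), Primrec sel →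
      Primrec fun x : (List ℕ × ℕ) × ℕ => sel (tdec (x.1.1.getD x.2 0)) := by
    intro sel hsel
    exact hsel.comp ((Primrec.ofNat WangTile).comp
      ((Primrec.list_getD 0).comp (Primrec.fst.comp Primrec.fst) Primrec.snd))
  have hbody : Primrec fun x : (List ℕ × ℕ) × ℕ =>
      ((!(decide (hcond x.1.2 x.2)) ||
        (tileRight (tdec (x.1.1.getD x.1.2 0)) == tileLeft (tdec (x.1.1.getD x.2 0)))) &&
      (!(decide (vcond x.1.2 x.2)) ||
        (tileUp (tdec (x.1.1.getD x.1.2 0)) == tileBottom (tdec (x.1.1.getD x.2 0))))) := by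
    refine (Primrec.dom_bool₂ (· && ·)).comp ?_ ?_
    · refine (Primrec.dom_bool₂ (· || ·)).comp ?_ ?_
      · exact (Primrec.dom_bool (!·)).comp
          (hcond_primrec.comp (Primrec.snd.comp Primrec.fst) Primrec.snd).decide
      · exact Primrec.beq.comp (htile _ tileRight_primrec) (htile' _ tileLeft_primrec)
    · refine (Primrec.dom_bool₂ (· || ·)).comp ?_ ?_
      · exact (Primrec.dom_bool (!·)).comp
          (vcond_primrec.comp (Primrec.snd.comp Primrec.fst) Primrec.snd).decide
      · exact Primrec.beq.comp (htile _ tileUp_primrec) (htile' _ tileBottom_primrec)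
  have hinner : Primrec fun x : List ℕ × ℕ =>
      (List.range x.1.length).all fun j =>
        ((!(decide (hcond x.2 j)) ||
          (tileRight (tdec (x.1.getD x.2 0)) == tileLeft (tdec (x.1.getD j 0)))) &&
        (!(decide (vcond x.2 j)) ||
          (tileUp (tdec (x.1.getD x.2 0)) == tileBottom (tdec (x.1.getD j 0))))) :=
    list_all_primrec (Primrec.list_range.comp (Primrec.list_length.comp Primrec.fst))
      hbody.to₂
  exact list_all_primrec (Primrec.list_range.comp Primrec.list_length) hinner.to₂

theorem P1_primrec : Primrec₂ P1 := by
  have hva : Primrec fun x : ℕ × List ℕ => (x.2.all fun v => decide (v < 2)) :=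
    list_all_primrec Primrec.snd
      ((Primrec.nat_lt.comp Primrec.snd (Primrec.const 2)).decide)
  have hv1 : Primrec fun x : ℕ × List ℕ => (x.2.all fun v => v == 1) :=
    list_all_primrec Primrec.snd ((Primrec.beq.comp Primrec.snd (Primrec.const 1)))
  have hb : Primrec fun x : ℕ × List ℕ => bigB (ldec x.1) :=
    bigB_primrec.comp ((Primrec.ofNat (List ℕ)).comp Primrec.fst)
  exact (Primrec.cond hva
    (Primrec.cond ((Primrec.dom_bool₂ (· && ·)).comp hv1 hb)
      (Primrec.const 1) (Primrec.const 0))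
    (Primrec.const 7)).to₂
theorem getD_map_range {p : ℕ → ℕ} {n i : ℕ} (h : i < n) :
    (List.map p (List.range n)).getD i 0 = p i := by
  have h1 : i < (List.map p (List.range n)).length := by simpa using h
  rw [List.getD_eq_getElem _ _ h1]
  simp

theorem red1 {g1 : ℕ → ℕ} (hg : ∀ e n, Phi (g1 e) n = HH Q1 P1 e n) (e : ℕ) :
    e ∈ NTILE ↔ g1 e ∈ WELL := by
  classical
  by_cases hT : PhiTotalBool e
  · obtain ⟨χ, hχ, hb⟩ := phiTotalBool_elim hT
    have hval : ∀ n, Phi (g1 e) n = Part.some (P1 n ((Q1 n).map χ)) :=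
      fun n => by rw [hg]; exact HH_eq χ fun k _ => hχ k
    have hmapb : ∀ n : ℕ, ∀ v ∈ (Q1 n).map χ, v < 2 := by
      intro n v hv
      obtain ⟨k, -, rfl⟩ := List.mem_map.1 hv
      exact hb k
    have hTB' : PhiTotalBool (g1 e) := by
      intro n
      refine ⟨P1 n ((Q1 n).map χ), by rw [hval n]; exact Part.mem_some _, ?_⟩
      exact P1_bool (hmapb n)
    have hmem : ∀ σ : List ℕ, σ ∈ TSet (g1 e) ↔ (adjP σ ∧ ∀ m ∈ σ, χ m = 1) := by
      intro σ
      unfold TSet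
      rw [Set.mem_setOf_eq, hval, Part.mem_some_iff, eq_comm]
      have hq : Q1 (Encodable.encode σ) = σ := Denumerable.ofNat_encode σ
      have hq' : ldec (Encodable.encode σ) = σ := Denumerable.ofNat_encode σ
      rw [P1_eq_one_iff (hmapb _), hq, hq']
      constructor
      · rintro ⟨h1, h2⟩
        exact ⟨h2, fun m hm => h1 (χ m) (List.mem_map.2 ⟨m, hm, rfl⟩)⟩
      · rintro ⟨h1, h2⟩
        refine ⟨fun v hv => ?_, h1⟩
        obtain ⟨m, hm, rfl⟩ := List.mem_map.1 hv
        exact h2 m hm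
    have htree : IsTree (TSet (g1 e)) := by
      intro σ hσ τ hτ
      rw [hmem] at hσ ⊢
      obtain ⟨r, rfl⟩ := hτ
      refine ⟨?_, fun m hm => hσ.2 m (List.mem_append.2 (Or.inl hm))⟩
      intro i hi j hj
      have h1 := hσ.1 i (by rw [List.length_append]; omega) j
        (by rw [List.length_append]; omega)
      rw [List.getD_append _ _ _ _ hi, List.getD_append _ _ _ _ hj] at h1
      exact h1
    have hiff : (∃ f : ℤ × ℤ → WangTile, IsTiling (PhiTileSet e) Set.univ f) ↔
        IllFounded (TSet (g1 e)) := by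
      constructor
      · rintro ⟨f, hmemS, hH, hV⟩
        refine ⟨fun i => Encodable.encode (f (zdec (Nat.unpair i).1, zdec (Nat.unpair i).2)),
          fun n => ?_⟩
        rw [hmem]
        constructor
        · intro i hi j hj
          rw [List.length_map, List.length_range] at hi hj
          rw [getD_map_range hi, getD_map_range hj]
          have e1 : ∀ k : ℕ, tdec (Encodable.encode
              (f (zdec (Nat.unpair k).1, zdec (Nat.unpair k).2))) =
              f (zdec (Nat.unpair k).1, zdec (Nat.unpair k).2) :=
            fun k => Denumerable.ofNat_encode _
          constructor
          · rintro ⟨hc1, hc2⟩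
            rw [e1, e1, hc1, hc2, zdec_succ]
            exact hH (zdec (Nat.unpair i).1) (zdec (Nat.unpair i).2) trivial trivial
          · rintro ⟨hc1, hc2⟩
            rw [e1, e1, hc1, hc2, zdec_succ]
            exact hV (zdec (Nat.unpair i).1) (zdec (Nat.unpair i).2) trivial trivial
        · intro m hm
          obtain ⟨i, -, rfl⟩ := List.mem_map.1 hm
          have := hmemS _ (Set.mem_univ (zdec (Nat.unpair i).1, zdec (Nat.unpair i).2))
          rw [tile_mem_iff hχ] at this
          exact this
      · rintro ⟨p, hp⟩
        refine ⟨fun q => tdec (p (Nat.pair (zenc q.1) (zenc q.2))), fun q _ => ?_, ?_, ?_⟩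
        · have h1 := hp (Nat.pair (zenc q.1) (zenc q.2) + 1)
          rw [hmem] at h1
          have h2 := h1.2 (p (Nat.pair (zenc q.1) (zenc q.2)))
            (List.mem_map.2 ⟨_, List.mem_range.2 (Nat.lt_succ_self _), rfl⟩)
          rw [tile_mem_iff hχ]
          show χ (Encodable.encode (tdec (p (Nat.pair (zenc q.1) (zenc q.2))))) = 1
          have henc : ∀ k : ℕ, Encodable.encode (tdec k) = k :=
            fun k => Denumerable.encode_ofNat k
          rw [henc]
          exact h2
        · intro x y _ _
          set i := Nat.pair (zenc x) (zenc y) with hidef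
          set j := Nat.pair (zenc (x+1)) (zenc y) with hjdef
          have h1 := hp (max i j + 1)
          rw [hmem] at h1
          have hi : i < max i j + 1 := by omega
          have hj : j < max i j + 1 := by omega
          have h2 := (h1.1 i (by simpa using hi) j (by simpa using hj)).1
          rw [getD_map_range hi, getD_map_range hj] at h2
          exact h2 ⟨by rw [hidef, hjdef]; simp [Nat.unpair_pair, zenc_succ], by
            rw [hidef, hjdef]; simp [Nat.unpair_pair]⟩
        · intro x y _ _
          set i := Nat.pair (zenc x) (zenc y) with hidef
          set j := Nat.pair (zenc x) (zenc (y+1)) with hjdef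
          have h1 := hp (max i j + 1)
          rw [hmem] at h1
          have hi : i < max i j + 1 := by omega
          have hj : j < max i j + 1 := by omega
          have h2 := (h1.1 i (by simpa using hi) j (by simpa using hj)).2
          rw [getD_map_range hi, getD_map_range hj] at h2
          exact h2 ⟨by rw [hidef, hjdef]; simp [Nat.unpair_pair], by
            rw [hidef, hjdef]; simp [Nat.unpair_pair, zenc_succ]⟩
    constructor
    · rintro ⟨-, hnt⟩
      exact ⟨hTB', htree, fun hill => hnt (hiff.2 hill)⟩
    · rintro ⟨-, -, hnill⟩
      exact ⟨hT, fun ht => hnill (hiff.1 ht)⟩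
  · have he : e ∉ NTILE := fun h => hT h.1
    have hnw : ¬ PhiTotalBool (g1 e) := by
      unfold PhiTotalBool at hT
      push_neg at hT
      obtain ⟨m, hm⟩ := hT
      have hQ : Q1 (Encodable.encode [m]) = [m] := Denumerable.ofNat_encode [m]
      by_cases hd : (Phi e m).Dom
      · set χ : ℕ → ℕ := fun k => if h : (Phi e k).Dom then (Phi e k).get h else 0 with hχdef
        have hχm : Phi e m = Part.some (χ m) := by
          rw [hχdef]
          simp only [dif_pos hd]
          exact (Part.some_get hd).symm
        have hval : Phi (g1 e) (Encodable.encode [m]) =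
            Part.some (P1 (Encodable.encode [m]) ((Q1 (Encodable.encode [m])).map χ)) := by
          rw [hg]
          refine HH_eq χ fun k hk => ?_
          rw [hQ, List.mem_singleton] at hk
          subst hk
          exact hχm
        have h2 : 2 ≤ χ m := by
          have hch : χ m ∈ Phi e m := by rw [hχm]; exact Part.mem_some _
          have := hm (χ m) hch
          omega
        have h7 : P1 (Encodable.encode [m]) ((Q1 (Encodable.encode [m])).map χ) = 7 :=
          P1_seven ⟨χ m, by rw [hQ]; simp, h2⟩
        exact not_totalBool_of_some7 (by rw [hval, h7])
      · refine not_totalBool_of_not_dom (n := Encodable.encode [m]) ?_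
        rw [hg]
        intro hdom
        exact hd (HH_dom_iff.1 hdom m (by rw [hQ]; simp))
    have hw : g1 e ∉ WELL := fun h => hnw h.1
    exact iff_of_false he hw
/-! ### Direction 2: WELL ≤ NTILE -/

def mk0 (zc sc : ℕ) : ℕ := Nat.pair 0 (Nat.pair zc sc)
def mk1 (tc dc : ℕ) : ℕ := Nat.pair 1 (Nat.pair tc dc)

def pathTile (z : ℤ) (σ τ : List ℕ) : WangTile :=
  (mk0 (zenc z) (Encodable.encode σ), mk0 (zenc z) (Encodable.encode σ),
   mk0 (zenc (z+1)) (Encodable.encode τ), mk0 (zenc z) (Encodable.encode σ))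

def fillTile (τ δ : List ℕ) : WangTile :=
  (mk1 (Encodable.encode τ) (Encodable.encode δ), mk1 (Encodable.encode τ) (Encodable.encode δ),
   mk1 (Encodable.encode τ) (Encodable.encode δ), mk1 (Encodable.encode τ) (Encodable.encode δ))

def zcOf (t : WangTile) : ℕ := (Nat.unpair (Nat.unpair (tileLeft t)).2).1
def scOf (t : WangTile) : ℕ := (Nat.unpair (Nat.unpair (tileLeft t)).2).2
def tcOf (t : WangTile) : ℕ := (Nat.unpair (Nat.unpair (tileRight t)).2).2

@[simp] theorem zcOf_pathTile (z : ℤ) (σ τ : List ℕ) : zcOf (pathTile z σ τ) = zenc z := by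
  simp [zcOf, pathTile, mk0, tileLeft, Nat.unpair_pair]

@[simp] theorem scOf_pathTile (z : ℤ) (σ τ : List ℕ) :
    scOf (pathTile z σ τ) = Encodable.encode σ := by
  simp [scOf, pathTile, mk0, tileLeft, Nat.unpair_pair]

@[simp] theorem tcOf_pathTile (z : ℤ) (σ τ : List ℕ) :
    tcOf (pathTile z σ τ) = Encodable.encode τ := by
  simp [tcOf, pathTile, mk0, tileRight, Nat.unpair_pair]

@[simp] theorem zcOf_fillTile (τ δ : List ℕ) : zcOf (fillTile τ δ) = Encodable.encode τ := by
  simp [zcOf, fillTile, mk1, tileLeft, Nat.unpair_pair]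

@[simp] theorem scOf_fillTile (τ δ : List ℕ) : scOf (fillTile τ δ) = Encodable.encode δ := by
  simp [scOf, fillTile, mk1, tileLeft, Nat.unpair_pair]

def pathFmt (t : WangTile) : Prop :=
  tileUp t = tileLeft t ∧ tileBottom t = tileLeft t ∧
  (Nat.unpair (tileLeft t)).1 = 0 ∧ (Nat.unpair (tileRight t)).1 = 0 ∧
  (Nat.unpair (Nat.unpair (tileRight t)).2).1 = zsucc (zcOf t) ∧
  (zcOf t % 2 = 0 →
    (ldec (scOf t)).length = zcOf t / 2 ∧
    (ldec (tcOf t)).length = (ldec (scOf t)).length + 1 ∧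
    (ldec (tcOf t)).reverse.tail = (ldec (scOf t)).reverse) ∧
  (¬(zcOf t % 2 = 0) → scOf t = 0 ∧ tcOf t = 0)

def fillFmt (t : WangTile) : Prop :=
  tileUp t = tileLeft t ∧ tileRight t = tileLeft t ∧ tileBottom t = tileLeft t ∧
  (Nat.unpair (tileLeft t)).1 = 1 ∧ ldec (scOf t) ≠ []

instance (t : WangTile) : Decidable (pathFmt t) := by unfold pathFmt; infer_instance
instance (t : WangTile) : Decidable (fillFmt t) := by unfold fillFmt; infer_instance

theorem encode_nil_list : Encodable.encode ([] : List ℕ) = 0 := rfl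

theorem ldec_encode (σ : List ℕ) : ldec (Encodable.encode σ) = σ := Denumerable.ofNat_encode σ

theorem encode_ldec (n : ℕ) : Encodable.encode (ldec n) = n := Denumerable.encode_ofNat n

theorem concat_of_rev {σ τ : List ℕ} (hlen : τ.length = σ.length + 1)
    (hrev : τ.reverse.tail = σ.reverse) : ∃ b, τ = σ ++ [b] := by
  rcases List.eq_nil_or_concat τ with rfl | ⟨l, b, rfl⟩
  · simp at hlen
  · refine ⟨b, ?_⟩
    have h1 : l.reverse = σ.reverse := by simpa using hrev
    have h2 : l = σ := by
      have := congrArg List.reverse h1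
      simpa using this
    rw [h2, List.concat_eq_append]

theorem fill_not_path (τ δ : List ℕ) : ¬ pathFmt (fillTile τ δ) := by
  intro h
  have := h.2.2.1
  simp [fillTile, mk1, tileLeft, Nat.unpair_pair] at this

theorem ldec_zero : ldec 0 = [] := by
  rw [← encode_nil_list]; exact ldec_encode []

theorem PF_iff (t : WangTile) : pathFmt t ↔ ∃ (z : ℤ) (σ τ : List ℕ), t = pathTile z σ τ ∧
    ((0 ≤ z ∧ σ.length = z.toNat ∧ ∃ b, τ = σ ++ [b]) ∨ (z < 0 ∧ σ = [] ∧ τ = [])) := by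
  constructor
  · rintro ⟨h1, h2, h3, h4, h5, h6, h7⟩
    set zc := zcOf t with hzc
    set sc := scOf t with hsc
    set tc := tcOf t with htc
    refine ⟨zdec zc, ldec sc, ldec tc, ?_, ?_⟩
    · have hPT : pathTile (zdec zc) (ldec sc) (ldec tc) =
          (mk0 zc sc, mk0 zc sc, mk0 (zsucc zc) tc, mk0 zc sc) := by
        unfold pathTile
        rw [zenc_succ, zenc_zdec, encode_ldec, encode_ldec]
      have hl : tileLeft t = mk0 zc sc := by
        unfold mk0
        conv_lhs => rw [← Nat.pair_unpair (tileLeft t)]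
        rw [h3]
        congr 1
        rw [hzc, hsc]
        exact (Nat.pair_unpair _).symm
      have hr : tileRight t = mk0 (zsucc zc) tc := by
        unfold mk0
        conv_lhs => rw [← Nat.pair_unpair (tileRight t)]
        rw [h4]
        congr 1
        conv_lhs => rw [← Nat.pair_unpair (Nat.unpair (tileRight t)).2]
        rw [h5, htc]
        rfl
      have ht : t = (tileLeft t, tileUp t, tileRight t, tileBottom t) := rfl
      rw [hPT, ht, h1, h2, hl, hr]
    · by_cases hev : zc % 2 = 0
      · obtain ⟨ha, hb', hc⟩ := h6 hev
        refine Or.inl ⟨(zdec_nonneg_iff _).2 hev, ?_, concat_of_rev hb' hc⟩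
        rw [zdec_toNat_even hev, ha]
      · obtain ⟨ha, hb'⟩ := h7 hev
        refine Or.inr ⟨?_, ?_, ?_⟩
        · rcases (lt_or_ge (zdec zc) 0) with h | h
          · exact h
          · exact absurd ((zdec_nonneg_iff _).1 h) hev
        · rw [ha]; exact ldec_zero
        · rw [hb']; exact ldec_zero
  · rintro ⟨z, σ, τ, rfl, hcase⟩
    have hzc : zcOf (pathTile z σ τ) = zenc z := zcOf_pathTile z σ τ
    refine ⟨rfl, rfl, ?_, ?_, ?_, ?_, ?_⟩
    · simp [pathTile, mk0, tileLeft, Nat.unpair_pair]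
    · simp [pathTile, mk0, tileRight, Nat.unpair_pair]
    · rw [hzc]
      simp [pathTile, mk0, tileRight, Nat.unpair_pair, zenc_succ]
    · intro hev
      rw [hzc] at hev ⊢
      rcases hcase with ⟨h0, hlen, b, rfl⟩ | ⟨hneg, rfl, rfl⟩
      · rw [scOf_pathTile, tcOf_pathTile, ldec_encode, ldec_encode, zenc_toNat_div h0]
        refine ⟨hlen, by simp, by simp⟩
      · exact absurd hev (zenc_odd_of_neg hneg)
    · intro hodd
      rw [hzc] at hodd
      rcases hcase with ⟨h0, -, -⟩ | ⟨hneg, rfl, rfl⟩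
      · exact absurd (zenc_even_of_nonneg h0) hodd
      · rw [scOf_pathTile, tcOf_pathTile, encode_nil_list]
        exact ⟨rfl, rfl⟩

theorem FF_iff (t : WangTile) : fillFmt t ↔ ∃ τ δ, δ ≠ [] ∧ t = fillTile τ δ := by
  constructor
  · rintro ⟨h1, h2, h3, h4, h5⟩
    set zc := zcOf t with hzc
    set sc := scOf t with hsc
    refine ⟨ldec zc, ldec sc, h5, ?_⟩
    have hFT : fillTile (ldec zc) (ldec sc) =
        (mk1 zc sc, mk1 zc sc, mk1 zc sc, mk1 zc sc) := by
      unfold fillTile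
      rw [encode_ldec, encode_ldec]
    have hl : tileLeft t = mk1 zc sc := by
      unfold mk1
      conv_lhs => rw [← Nat.pair_unpair (tileLeft t)]
      rw [h4]
      congr 1
      rw [hzc, hsc]
      exact (Nat.pair_unpair _).symm
    have ht : t = (tileLeft t, tileUp t, tileRight t, tileBottom t) := rfl
    rw [hFT, ht, h1, h2, h3, hl]
  · rintro ⟨τ, δ, hδ, rfl⟩
    refine ⟨rfl, rfl, rfl, ?_, ?_⟩
    · simp [fillTile, mk1, tileLeft, Nat.unpair_pair]
    · rw [scOf_fillTile, ldec_encode]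
      exact hδ

def Q2 (n : ℕ) : List ℕ :=
  if pathFmt (tdec n) then [scOf (tdec n), tcOf (tdec n)]
  else if fillFmt (tdec n) then
    [zcOf (tdec n), Encodable.encode (ldec (zcOf (tdec n)) ++ ldec (scOf (tdec n)))]
  else []

def P2 (n : ℕ) (vs : List ℕ) : ℕ :=
  cond (vs.all fun v => decide (v < 2))
    (if pathFmt (tdec n) then cond ((vs.getD 0 0 == 1) && (vs.getD 1 0 == 1)) 1 0
     else if fillFmt (tdec n) then cond ((vs.getD 0 0 == 0) && (vs.getD 1 0 == 1)) 1 0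
     else 0) 7

theorem P2_seven {n : ℕ} {vs : List ℕ} (h : ∃ v ∈ vs, 2 ≤ v) : P2 n vs = 7 := by
  obtain ⟨v, hv, h2⟩ := h
  have : (vs.all fun v => decide (v < 2)) = false := by
    rw [Bool.eq_false_iff]
    intro hall
    have := List.all_eq_true.1 hall v hv
    simp at this; omega
  rw [P2, this]; rfl

theorem P2_bool {n : ℕ} {vs : List ℕ} (h : ∀ v ∈ vs, v < 2) :
    P2 n vs = 0 ∨ P2 n vs = 1 := by
  have hall : (vs.all fun v => decide (v < 2)) = true :=
    List.all_eq_true.2 fun v hv => by simpa using h v hv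
  rw [P2, hall]
  simp only [Bool.cond_true]
  split_ifs
  · cases ((vs.getD 0 0 == 1) && (vs.getD 1 0 == 1)) <;> simp
  · cases ((vs.getD 0 0 == 0) && (vs.getD 1 0 == 1)) <;> simp
  · exact Or.inl rfl

theorem P2_path_eq_one {n : ℕ} {vs : List ℕ} (h : ∀ v ∈ vs, v < 2)
    (hpf : pathFmt (tdec n)) : P2 n vs = 1 ↔ (vs.getD 0 0 = 1 ∧ vs.getD 1 0 = 1) := by
  have hall : (vs.all fun v => decide (v < 2)) = true :=
    List.all_eq_true.2 fun v hv => by simpa using h v hv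
  rw [P2, hall]
  simp only [Bool.cond_true, if_pos hpf]
  cases hb : ((vs.getD 0 0 == 1) && (vs.getD 1 0 == 1))
  · simp only [Bool.cond_false]
    rw [Bool.eq_false_iff] at hb
    constructor
    · omega
    · rintro ⟨ha, hb'⟩
      exact absurd (by rw [ha, hb']; rfl) hb
  · simp only [Bool.cond_true]
    rw [Bool.and_eq_true, beq_iff_eq, beq_iff_eq] at hb
    exact iff_of_true (by trivial) hb

theorem P2_fill_eq_one {n : ℕ} {vs : List ℕ} (h : ∀ v ∈ vs, v < 2)
    (hnpf : ¬ pathFmt (tdec n)) (hff : fillFmt (tdec n)) :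
    P2 n vs = 1 ↔ (vs.getD 0 0 = 0 ∧ vs.getD 1 0 = 1) := by
  have hall : (vs.all fun v => decide (v < 2)) = true :=
    List.all_eq_true.2 fun v hv => by simpa using h v hv
  rw [P2, hall]
  simp only [Bool.cond_true, if_neg hnpf, if_pos hff]
  cases hb : ((vs.getD 0 0 == 0) && (vs.getD 1 0 == 1))
  · simp only [Bool.cond_false]
    rw [Bool.eq_false_iff] at hb
    constructor
    · omega
    · rintro ⟨ha, hb'⟩
      exact absurd (by rw [ha, hb']; rfl) hb
  · simp only [Bool.cond_true]
    rw [Bool.and_eq_true, beq_iff_eq, beq_iff_eq] at hb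
    exact iff_of_true (by trivial) hb

theorem P2_none {n : ℕ} {vs : List ℕ} (h : ∀ v ∈ vs, v < 2)
    (hnpf : ¬ pathFmt (tdec n)) (hnff : ¬ fillFmt (tdec n)) : P2 n vs = 0 := by
  have hall : (vs.all fun v => decide (v < 2)) = true :=
    List.all_eq_true.2 fun v hv => by simpa using h v hv
  rw [P2, hall]
  simp only [Bool.cond_true, if_neg hnpf, if_neg hnff]
theorem mem_S2 {e ge : ℕ} {χ : ℕ → ℕ} (hχ : ∀ m, Phi e m = Part.some (χ m))
    (hb : ∀ m, χ m < 2) (hval : ∀ n, Phi ge n = Part.some (P2 n ((Q2 n).map χ)))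
    (t : WangTile) : t ∈ PhiTileSet ge ↔
      (pathFmt t ∧ ldec (scOf t) ∈ TSet e ∧ ldec (tcOf t) ∈ TSet e) ∨
      (¬ pathFmt t ∧ fillFmt t ∧ ldec (zcOf t) ∉ TSet e ∧
        (ldec (zcOf t) ++ ldec (scOf t)) ∈ TSet e) := by
  have htd : tdec (Encodable.encode t) = t := Denumerable.ofNat_encode t
  unfold PhiTileSet
  rw [Set.mem_setOf_eq, hval, Part.mem_some_iff, eq_comm]
  have hlt : ∀ v ∈ (Q2 (Encodable.encode t)).map χ, v < 2 := fun v hv => by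
    obtain ⟨k, -, rfl⟩ := List.mem_map.1 hv; exact hb k
  by_cases hpf : pathFmt t
  · have hQ : Q2 (Encodable.encode t) = [scOf t, tcOf t] := by
      rw [Q2, htd, if_pos hpf]
    rw [P2_path_eq_one hlt (by rw [htd]; exact hpf), hQ]
    simp only [List.map_cons, List.map_nil, List.getD_cons_zero, List.getD_cons_succ]
    have hs := TSet_mem_iff hχ (ldec (scOf t))
    have ht' := TSet_mem_iff hχ (ldec (tcOf t))
    rw [encode_ldec] at hs ht'
    constructor
    · rintro ⟨hA, hB⟩
      exact Or.inl ⟨hpf, hs.2 hA, ht'.2 hB⟩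
    · rintro (⟨-, hA, hB⟩ | ⟨hnp, -⟩)
      · exact ⟨hs.1 hA, ht'.1 hB⟩
      · exact absurd hpf hnp
  · by_cases hff : fillFmt t
    · have hQ : Q2 (Encodable.encode t) = [zcOf t,
          Encodable.encode (ldec (zcOf t) ++ ldec (scOf t))] := by
        rw [Q2, htd, if_neg hpf, if_pos hff]
      rw [P2_fill_eq_one hlt (by rw [htd]; exact hpf) (by rw [htd]; exact hff), hQ]
      simp only [List.map_cons, List.map_nil, List.getD_cons_zero, List.getD_cons_succ]
      have hz := TSet_mem_iff hχ (ldec (zcOf t))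
      have hzs := TSet_mem_iff hχ (ldec (zcOf t) ++ ldec (scOf t))
      rw [encode_ldec] at hz
      constructor
      · rintro ⟨hA, hB⟩
        refine Or.inr ⟨hpf, hff, ?_, hzs.2 hB⟩
        rw [hz]
        have := hb (zcOf t)
        omega
      · rintro (⟨hp, -⟩ | ⟨-, -, hA, hB⟩)
        · exact absurd hp hpf
        · refine ⟨?_, hzs.1 hB⟩
          rw [hz] at hA
          have := hb (zcOf t)
          omega
    · rw [P2_none hlt (by rw [htd]; exact hpf) (by rw [htd]; exact hff)]
      refine iff_of_false (by omega) ?_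
      rintro (⟨hp, -⟩ | ⟨-, hf, -⟩)
      · exact hpf hp
      · exact hff hf

theorem red2 {g2 : ℕ → ℕ} (hg : ∀ e n, Phi (g2 e) n = HH Q2 P2 e n) (e : ℕ) :
    e ∈ WELL ↔ g2 e ∈ NTILE := by
  classical
  by_cases hT : PhiTotalBool e
  · obtain ⟨χ, hχ, hb⟩ := phiTotalBool_elim hT
    have hval : ∀ n, Phi (g2 e) n = Part.some (P2 n ((Q2 n).map χ)) :=
      fun n => by rw [hg]; exact HH_eq χ fun k _ => hχ k
    have hmapb : ∀ n : ℕ, ∀ v ∈ (Q2 n).map χ, v < 2 := by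
      intro n v hv
      obtain ⟨k, -, rfl⟩ := List.mem_map.1 hv
      exact hb k
    have hTB' : PhiTotalBool (g2 e) := by
      intro n
      refine ⟨P2 n ((Q2 n).map χ), by rw [hval n]; exact Part.mem_some _, ?_⟩
      exact P2_bool (hmapb n)
    have hS := mem_S2 hχ hb hval
    by_cases htree : IsTree (TSet e)
    · have hiff : IllFounded (TSet e) ↔
          (∃ f : ℤ × ℤ → WangTile, IsTiling (PhiTileSet (g2 e)) Set.univ f) := by
        constructor
        · rintro ⟨p, hp⟩
          refine ⟨fun q => pathTile q.1 (List.map p (List.range q.1.toNat))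
            (List.map p (List.range (q.1+1).toNat)), fun q _ => ?_,
            fun _ _ _ _ => rfl, fun _ _ _ _ => rfl⟩
          rw [hS]
          refine Or.inl ⟨?_, ?_, ?_⟩
          · rw [PF_iff]
            refine ⟨q.1, _, _, rfl, ?_⟩
            rcases le_or_gt 0 q.1 with h0 | h0
            · refine Or.inl ⟨h0, by simp, ?_⟩
              have h1 : (q.1+1).toNat = q.1.toNat + 1 := by omega
              exact ⟨p q.1.toNat, by rw [h1, List.range_succ]; simp⟩
            · have h1 : q.1.toNat = 0 := by omega
              have h2 : (q.1+1).toNat = 0 := by omega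
              exact Or.inr ⟨h0, by rw [h1]; rfl, by rw [h2]; rfl⟩
          · rw [scOf_pathTile, ldec_encode]; exact hp _
          · rw [tcOf_pathTile, ldec_encode]; exact hp _
        · rintro ⟨f, hmem, hH, hV⟩
          have hpath : ∀ q : ℤ × ℤ, pathFmt (f q) ∧ ldec (scOf (f q)) ∈ TSet e ∧
              ldec (tcOf (f q)) ∈ TSet e := by
            intro q
            rcases (hS (f q)).1 (hmem q (Set.mem_univ q)) with h | ⟨-, -, hnt, hmt⟩
            · exact h
            · exact absurd (htree _ hmt _ (List.prefix_append _ _)) hnt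
          have hPF : ∀ x : ℤ, ∃ (z : ℤ) (σ τ : List ℕ), f (x, 0) = pathTile z σ τ ∧
              ((0 ≤ z ∧ σ.length = z.toNat ∧ ∃ b, τ = σ ++ [b]) ∨
                (z < 0 ∧ σ = [] ∧ τ = [])) ∧ σ ∈ TSet e ∧ τ ∈ TSet e := by
            intro x
            obtain ⟨hpf, hs, ht'⟩ := hpath (x, 0)
            obtain ⟨z, σ, τ, heq, hcase⟩ := (PF_iff _).1 hpf
            refine ⟨z, σ, τ, heq, hcase, ?_, ?_⟩
            · rw [heq, scOf_pathTile, ldec_encode] at hs; exact hs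
            · rw [heq, tcOf_pathTile, ldec_encode] at ht'; exact ht'
          choose Z SS TT hEq hCase hST hTT using hPF
          have hstepZ : ∀ x : ℤ, Z (x+1) = Z x + 1 ∧ SS (x+1) = TT x := by
            intro x
            have h1 := hH x 0 (Set.mem_univ _) (Set.mem_univ _)
            rw [hEq x, hEq (x+1)] at h1
            have h2 : mk0 (zenc (Z x + 1)) (Encodable.encode (TT x)) =
                mk0 (zenc (Z (x+1))) (Encodable.encode (SS (x+1))) := h1
            have hA := congrArg (fun k => (Nat.unpair (Nat.unpair k).2).1) h2
            have hB := congrArg (fun k => (Nat.unpair (Nat.unpair k).2).2) h2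
            simp only [mk0, Nat.unpair_pair] at hA hB
            exact ⟨(zenc_inj hA).symm, (Encodable.encode_injective hB).symm⟩
          have hZlin : ∀ x : ℤ, Z x = Z 0 + x := by
            intro x
            induction x using Int.induction_on with
            | zero => simp
            | succ i ih =>
                have := (hstepZ (i : ℤ)).1
                rw [ih] at this
                rw [this]; ring
            | pred i ih =>
                have := (hstepZ (-(i:ℤ) - 1)).1
                rw [show (-(i:ℤ) - 1 + 1 : ℤ) = -(i:ℤ) by ring, ih] at this
                linarith
          have hZn : ∀ n : ℕ, Z ((n : ℤ) - Z 0) = n := by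
            intro n; rw [hZlin]; ring
          have hcasen : ∀ n : ℕ, (SS ((n:ℤ) - Z 0)).length = n ∧
              ∃ b, SS (((n+1:ℕ):ℤ) - Z 0) = SS ((n:ℤ) - Z 0) ++ [b] := by
            intro n
            rcases hCase ((n:ℤ) - Z 0) with ⟨h0, hlen, b, hb'⟩ | ⟨hneg, -, -⟩
            · constructor
              · rw [hZn n] at hlen
                simpa using hlen
              · refine ⟨b, ?_⟩
                have hx : ((n+1 : ℕ) : ℤ) - Z 0 = ((n:ℤ) - Z 0) + 1 := by push_cast; ring
                rw [hx, (hstepZ _).2, hb']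
            · exfalso
              rw [hZn n] at hneg
              exact absurd hneg (by omega)
          choose pf hpf' using fun n => (hcasen n).2
          have hmapA : ∀ n, List.map pf (List.range n) = SS ((n:ℤ) - Z 0) := by
            intro n
            induction n with
            | zero =>
                have h0 : (SS ((0:ℕ) - Z 0 : ℤ)).length = 0 := by
                  simpa using (hcasen 0).1
                rw [List.range_zero, List.map_nil]
                exact (List.length_eq_zero_iff.1 h0).symm
            | succ k ih =>
                rw [List.range_succ, List.map_append, ih]
                have := hpf' k
                rw [show ((k+1:ℕ):ℤ) = ((k:ℤ)+1) by push_cast; ring] at this ⊢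
                rw [this]
                simp
          exact ⟨pf, fun n => by rw [hmapA]; exact hST _⟩
      constructor
      · rintro ⟨-, -, hnill⟩
        exact ⟨hTB', fun ht' => hnill (hiff.2 ht')⟩
      · rintro ⟨-, hnt⟩
        exact ⟨hT, htree, fun hill => hnt (hiff.1 hill)⟩
    · have hnw : e ∉ WELL := fun h => htree h.2.1
      have hex : ∃ f : ℤ × ℤ → WangTile, IsTiling (PhiTileSet (g2 e)) Set.univ f := by
        unfold IsTree at htree
        push_neg at htree
        obtain ⟨σ, hσ, τ, hτpre, hτnot⟩ := htree
        obtain ⟨r, rfl⟩ := hτpre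
        have hr : r ≠ [] := by
          rintro rfl
          rw [List.append_nil] at hσ
          exact hτnot hσ
        refine ⟨fun _ => fillTile τ r, fun q _ => ?_, fun _ _ _ _ => rfl, fun _ _ _ _ => rfl⟩
        rw [hS]
        refine Or.inr ⟨fill_not_path τ r, (FF_iff _).2 ⟨τ, r, hr, rfl⟩, ?_, ?_⟩
        · rw [zcOf_fillTile, ldec_encode]; exact hτnot
        · rw [zcOf_fillTile, scOf_fillTile, ldec_encode, ldec_encode]; exact hσ
      exact iff_of_false hnw (fun h => h.2 hex)
  · have hnw : e ∉ WELL := fun h => hT h.1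
    have hnb : ¬ PhiTotalBool (g2 e) := by
      unfold PhiTotalBool at hT
      push_neg at hT
      obtain ⟨m, hm⟩ := hT
      have hquery : ∃ n, m ∈ Q2 n := by
        by_cases hnil : ldec m = []
        · refine ⟨Encodable.encode (pathTile 0 [] [0]), ?_⟩
          have hpf : pathFmt (pathTile 0 [] [0]) :=
            (PF_iff _).2 ⟨0, [], [0], rfl, Or.inl ⟨le_refl 0, rfl, 0, rfl⟩⟩
          have htd : tdec (Encodable.encode (pathTile 0 [] [0])) = pathTile 0 [] [0] :=
            Denumerable.ofNat_encode _
          rw [Q2, htd, if_pos hpf, scOf_pathTile]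
          have hm0 : m = Encodable.encode ([] : List ℕ) := by rw [← hnil, encode_ldec]
          rw [← hm0]
          exact List.mem_cons_self
        · refine ⟨Encodable.encode (fillTile [] (ldec m)), ?_⟩
          have hff : fillFmt (fillTile [] (ldec m)) := (FF_iff _).2 ⟨[], ldec m, hnil, rfl⟩
          have hnp := fill_not_path [] (ldec m)
          have htd : tdec (Encodable.encode (fillTile [] (ldec m))) = fillTile [] (ldec m) :=
            Denumerable.ofNat_encode _
          rw [Q2, htd, if_neg hnp, if_pos hff, zcOf_fillTile, scOf_fillTile,
            ldec_encode, ldec_encode, List.nil_append, encode_ldec]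
          exact List.mem_cons_of_mem _ (List.mem_cons_self)
      obtain ⟨n, hmQ⟩ := hquery
      by_cases hd : ∀ k ∈ Q2 n, (Phi e k).Dom
      · set χ : ℕ → ℕ := fun k => if h : (Phi e k).Dom then (Phi e k).get h else 0 with hχdef
        have hval : Phi (g2 e) n = Part.some (P2 n ((Q2 n).map χ)) := by
          rw [hg]
          refine HH_eq χ fun k hk => ?_
          rw [hχdef]
          simp only [dif_pos (hd k hk)]
          exact (Part.some_get _).symm
        have h2 : 2 ≤ χ m := by
          have hdm := hd m hmQ
          have hch : χ m ∈ Phi e m := by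
            rw [hχdef]
            simp only [dif_pos hdm]
            exact Part.get_mem _
          have := hm (χ m) hch
          omega
        have h7 : P2 n ((Q2 n).map χ) = 7 :=
          P2_seven ⟨χ m, List.mem_map_of_mem (f := χ) hmQ, h2⟩
        exact not_totalBool_of_some7 (by rw [hval, h7])
      · push_neg at hd
        obtain ⟨k, hk, hkd⟩ := hd
        refine not_totalBool_of_not_dom (n := n) ?_
        rw [hg]
        exact fun hdom => hkd (HH_dom_iff.1 hdom k hk)
    exact iff_of_false hnw (fun h => hnb h.1)
theorem pimp {α} [Primcodable α] {p q : α → Prop} [DecidablePred p] [DecidablePred q]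
    (hp : PrimrecPred p) (hq : PrimrecPred q) : PrimrecPred fun a => p a → q a :=
  (hp.not.or hq).of_eq fun _ => (imp_iff_not_or).symm

theorem zcOf_primrec : Primrec zcOf :=
  Primrec.fst.comp (Primrec.unpair.comp (Primrec.snd.comp (Primrec.unpair.comp tileLeft_primrec)))

theorem scOf_primrec : Primrec scOf :=
  Primrec.snd.comp (Primrec.unpair.comp (Primrec.snd.comp (Primrec.unpair.comp tileLeft_primrec)))

theorem tcOf_primrec : Primrec tcOf :=
  Primrec.snd.comp (Primrec.unpair.comp (Primrec.snd.comp (Primrec.unpair.comp tileRight_primrec)))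

theorem ldec_primrec : Primrec ldec := Primrec.ofNat (List ℕ)

theorem pathFmt_primrec : PrimrecPred pathFmt := by
  have hldecS : Primrec fun t : WangTile => ldec (scOf t) := ldec_primrec.comp scOf_primrec
  have hldecT : Primrec fun t : WangTile => ldec (tcOf t) := ldec_primrec.comp tcOf_primrec
  have c1 : PrimrecPred fun t : WangTile => tileUp t = tileLeft t :=
    Primrec.eq.comp tileUp_primrec tileLeft_primrec
  have c2 : PrimrecPred fun t : WangTile => tileBottom t = tileLeft t :=
    Primrec.eq.comp tileBottom_primrec tileLeft_primrec
  have c3 : PrimrecPred fun t : WangTile => (Nat.unpair (tileLeft t)).1 = 0 :=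
    Primrec.eq.comp (Primrec.fst.comp (Primrec.unpair.comp tileLeft_primrec)) (Primrec.const 0)
  have c4 : PrimrecPred fun t : WangTile => (Nat.unpair (tileRight t)).1 = 0 :=
    Primrec.eq.comp (Primrec.fst.comp (Primrec.unpair.comp tileRight_primrec)) (Primrec.const 0)
  have c5 : PrimrecPred fun t : WangTile =>
      (Nat.unpair (Nat.unpair (tileRight t)).2).1 = zsucc (zcOf t) :=
    Primrec.eq.comp
      (Primrec.fst.comp (Primrec.unpair.comp (Primrec.snd.comp
        (Primrec.unpair.comp tileRight_primrec))))
      (Primrec.zsucc.comp zcOf_primrec)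
  have hev : PrimrecPred fun t : WangTile => zcOf t % 2 = 0 :=
    Primrec.eq.comp (Primrec.nat_mod.comp zcOf_primrec (Primrec.const 2)) (Primrec.const 0)
  have lenS : Primrec fun t : WangTile => (ldec (scOf t)).length :=
    Primrec.list_length.comp hldecS
  have lenT : Primrec fun t : WangTile => (ldec (tcOf t)).length :=
    Primrec.list_length.comp hldecT
  have d1 : PrimrecPred fun t : WangTile => (ldec (scOf t)).length = zcOf t / 2 :=
    Primrec.eq.comp lenS (Primrec.nat_div.comp zcOf_primrec (Primrec.const 2))
  have d2 : PrimrecPred fun t : WangTile => (ldec (tcOf t)).length = (ldec (scOf t)).length + 1 :=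
    Primrec.eq.comp lenT (Primrec.succ.comp lenS)
  have d3 : PrimrecPred fun t : WangTile =>
      (ldec (tcOf t)).reverse.tail = (ldec (scOf t)).reverse :=
    Primrec.eq.comp (Primrec.list_tail.comp (Primrec.list_reverse.comp hldecT))
      (Primrec.list_reverse.comp hldecS)
  have e1 : PrimrecPred fun t : WangTile => scOf t = 0 :=
    Primrec.eq.comp scOf_primrec (Primrec.const 0)
  have e2 : PrimrecPred fun t : WangTile => tcOf t = 0 :=
    Primrec.eq.comp tcOf_primrec (Primrec.const 0)
  have i1 := pimp hev (d1.and (d2.and d3))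
  have i2 := pimp hev.not (e1.and e2)
  exact (c1.and (c2.and (c3.and (c4.and (c5.and (i1.and i2)))))).of_eq fun t => by
    unfold pathFmt
    exact Iff.rfl

theorem fillFmt_primrec : PrimrecPred fillFmt := by
  have c1 : PrimrecPred fun t : WangTile => tileUp t = tileLeft t :=
    Primrec.eq.comp tileUp_primrec tileLeft_primrec
  have c2 : PrimrecPred fun t : WangTile => tileRight t = tileLeft t :=
    Primrec.eq.comp tileRight_primrec tileLeft_primrec
  have c3 : PrimrecPred fun t : WangTile => tileBottom t = tileLeft t :=
    Primrec.eq.comp tileBottom_primrec tileLeft_primrec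
  have c4 : PrimrecPred fun t : WangTile => (Nat.unpair (tileLeft t)).1 = 1 :=
    Primrec.eq.comp (Primrec.fst.comp (Primrec.unpair.comp tileLeft_primrec)) (Primrec.const 1)
  have c5 : PrimrecPred fun t : WangTile => ldec (scOf t) ≠ [] :=
    (Primrec.eq.comp (ldec_primrec.comp scOf_primrec) (Primrec.const ([] : List ℕ))).not
  exact (c1.and (c2.and (c3.and (c4.and c5)))).of_eq fun t => by unfold fillFmt; exact Iff.rfl

theorem Q2_primrec : Primrec Q2 := by
  have htdec : Primrec tdec := Primrec.ofNat WangTile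
  have hpp : PrimrecPred fun n : ℕ => pathFmt (tdec n) := pathFmt_primrec.comp htdec
  have hfp : PrimrecPred fun n : ℕ => fillFmt (tdec n) := fillFmt_primrec.comp htdec
  have hzc' : Primrec fun n : ℕ => zcOf (tdec n) := zcOf_primrec.comp htdec
  have hsc' : Primrec fun n : ℕ => scOf (tdec n) := scOf_primrec.comp htdec
  have htc' : Primrec fun n : ℕ => tcOf (tdec n) := tcOf_primrec.comp htdec
  exact Primrec.ite hpp
    (Primrec.list_cons.comp hsc' (Primrec.list_cons.comp htc' (Primrec.const [])))
    (Primrec.ite hfp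
      (Primrec.list_cons.comp hzc'
        (Primrec.list_cons.comp
          (Primrec.encode.comp (Primrec.list_append.comp
            (ldec_primrec.comp hzc') (ldec_primrec.comp hsc')))
          (Primrec.const [])))
      (Primrec.const []))

theorem P2_primrec : Primrec₂ P2 := by
  have htdec : Primrec tdec := Primrec.ofNat WangTile
  have hall : Primrec fun x : ℕ × List ℕ => (x.2.all fun v => decide (v < 2)) :=
    list_all_primrec Primrec.snd (Primrec.nat_lt.comp Primrec.snd (Primrec.const 2)).decide
  have g0 : Primrec fun x : ℕ × List ℕ => x.2.getD 0 0 :=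
    (Primrec.list_getD 0).comp Primrec.snd (Primrec.const 0)
  have g1 : Primrec fun x : ℕ × List ℕ => x.2.getD 1 0 :=
    (Primrec.list_getD 0).comp Primrec.snd (Primrec.const 1)
  have hpp : PrimrecPred fun x : ℕ × List ℕ => pathFmt (tdec x.1) :=
    pathFmt_primrec.comp (htdec.comp Primrec.fst)
  have hfp : PrimrecPred fun x : ℕ × List ℕ => fillFmt (tdec x.1) :=
    fillFmt_primrec.comp (htdec.comp Primrec.fst)
  have b1 : Primrec fun x : ℕ × List ℕ =>
      cond ((x.2.getD 0 0 == 1) && (x.2.getD 1 0 == 1)) 1 0 :=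
    Primrec.cond ((Primrec.dom_bool₂ (· && ·)).comp
      (Primrec.beq.comp g0 (Primrec.const 1)) (Primrec.beq.comp g1 (Primrec.const 1)))
      (Primrec.const 1) (Primrec.const 0)
  have b2 : Primrec fun x : ℕ × List ℕ =>
      cond ((x.2.getD 0 0 == 0) && (x.2.getD 1 0 == 1)) 1 0 :=
    Primrec.cond ((Primrec.dom_bool₂ (· && ·)).comp
      (Primrec.beq.comp g0 (Primrec.const 0)) (Primrec.beq.comp g1 (Primrec.const 1)))
      (Primrec.const 1) (Primrec.const 0)
  exact (Primrec.cond hall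
    (Primrec.ite hpp b1 (Primrec.ite hfp b2 (Primrec.const 0)))
    (Primrec.const 7)).to₂

end WangRed

/-- `(¬TILE) ≡_m WELL`. -/
theorem NTILE_manyOneEquiv_WELL :
    (· ∈ NTILE) ≤₀ (· ∈ WELL) ∧ (· ∈ WELL) ≤₀ (· ∈ NTILE) := by
  obtain ⟨g1, hg1c, hg1⟩ :=
    WangRed.exists_index (WangRed.HH_partrec WangRed.Q1_primrec WangRed.P1_primrec)
  obtain ⟨g2, hg2c, hg2⟩ :=
    WangRed.exists_index (WangRed.HH_partrec WangRed.Q2_primrec WangRed.P2_primrec)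
  exact ⟨⟨g1, hg1c, fun e => WangRed.red1 (fun e n => hg1 e n) e⟩,
    ⟨g2, hg2c, fun e => WangRed.red2 (fun e n => hg2 e n) e⟩⟩
end

section
/- WELL ≤_m PTile. -/
/-- A total tiling is periodic if it is invariant under some nonzero translation. -/
def IsPeriodic (f : ℤ × ℤ → WangTile) : Prop :=
  ∃ v : ℤ × ℤ, v ≠ 0 ∧ ∀ p : ℤ × ℤ, f (p + v) = f p

def PTile : Set ℕ :=
  {e | PhiTotalBool e ∧ (∃ f : ℤ × ℤ → WangTile, IsTiling (PhiTileSet e) Set.univ f) ∧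
    ∀ f : ℤ × ℤ → WangTile, IsTiling (PhiTileSet e) Set.univ f → IsPeriodic f}

namespace W2P
open Encodable Denumerable

def iota (z : ℤ) : ℕ := if 0 ≤ z then 2 * z.toNat else 2 * (-z).toNat - 1

def zs (a : ℕ) : ℕ := if a % 2 = 0 then a + 2 else if a = 1 then 0 else a - 2

lemma zs_iota (z : ℤ) : zs (iota z) = iota (z + 1) := by
  unfold zs iota; split_ifs <;> omega

lemma iota_inj : Function.Injective iota := by
  intro a b h; unfold iota at h; split_ifs at h <;> omega

def col (i p : ℕ) : ℕ := Nat.pair i p + 1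

lemma col_inj {i p j q : ℕ} (h : col i p = col j q) : i = j ∧ p = q := by
  unfold col at h
  have h' : Nat.pair i p = Nat.pair j q := by omega
  have h1 := congrArg Nat.unpair h'
  simpa [Nat.unpair_pair, Prod.ext_iff] using h1

lemma col_ne_zero (i p : ℕ) : col i p ≠ 0 := Nat.succ_ne_zero _

lemma col_ne {i j p q : ℕ} (h : i ≠ j) : col i p ≠ col j q := fun hh => h (col_inj hh).1

def tA : WangTile := (0, 0, 0, 0)
def tBl : WangTile := (col 6 0, col 7 0, col 6 0, col 7 0)
def tC (n a : ℕ) : WangTile := (col 1 (Nat.pair n a), col 2 n, col 1 (Nat.pair n (zs a)), col 2 n)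
def tT (σ : List ℕ) (k a : ℕ) : WangTile :=
  (col 5 (Nat.pair (encode σ) a), col 4 (encode (σ ++ [k])),
   col 5 (Nat.pair (encode σ) (zs a)),
   if σ = [] then col 7 0 else col 4 (encode σ))

def nOf (t : WangTile) : ℕ := (t.1 - 1).unpair.2.unpair.1
def aOf (t : WangTile) : ℕ := (t.1 - 1).unpair.2.unpair.2
def sOf (t : WangTile) : List ℕ := ofNat (List ℕ) (nOf t)
def kOf (t : WangTile) : ℕ := ((ofNat (List ℕ) ((t.2.1 - 1).unpair.2)).reverse).headI

@[simp] lemma nOf_tC (n a : ℕ) : nOf (tC n a) = n := by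
  simp [nOf, tC, col, Nat.unpair_pair]

@[simp] lemma aOf_tC (n a : ℕ) : aOf (tC n a) = a := by
  simp [aOf, tC, col, Nat.unpair_pair]

@[simp] lemma nOf_tT (σ : List ℕ) (k a : ℕ) : nOf (tT σ k a) = encode σ := by
  simp [nOf, tT, col, Nat.unpair_pair]

@[simp] lemma sOf_tT (σ : List ℕ) (k a : ℕ) : sOf (tT σ k a) = σ := by
  simp [sOf, ofNat_encode]

@[simp] lemma aOf_tT (σ : List ℕ) (k a : ℕ) : aOf (tT σ k a) = a := by
  simp [aOf, tT, col, Nat.unpair_pair]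

@[simp] lemma kOf_tT (σ : List ℕ) (k a : ℕ) : kOf (tT σ k a) = k := by
  simp [kOf, tT, col, Nat.unpair_pair, ofNat_encode]

lemma pair_inj {a b c d : ℕ} (h : Nat.pair a b = Nat.pair c d) : a = c ∧ b = d := by
  have h1 := congrArg Nat.unpair h
  simpa [Nat.unpair_pair, Prod.ext_iff] using h1

lemma tC_inj {n a n' a' : ℕ} (h : tC n a = tC n' a') : n = n' ∧ a = a' := by
  have h1 := congrArg Prod.fst h
  simp only [tC] at h1
  have := pair_inj (col_inj h1).2
  exact ⟨this.1, this.2⟩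

lemma encode_list_inj {σ τ : List ℕ} (h : encode σ = encode τ) : σ = τ :=
  Encodable.encode_injective h

lemma tT_inj {σ k a σ' k' a'} (h : tT σ k a = tT σ' k' a') : σ = σ' ∧ k = k' ∧ a = a' := by
  have h1 := congrArg Prod.fst h
  have h2 := congrArg (fun t : WangTile => t.2.1) h
  simp only [tT] at h1 h2
  have hp := pair_inj (col_inj h1).2
  have hσ : σ = σ' := encode_list_inj hp.1
  subst hσ
  have hk : σ ++ [k] = σ ++ [k'] := encode_list_inj (col_inj h2).2
  simp at hk
  exact ⟨rfl, hk, hp.2⟩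

lemma tC_ne_tA (n a : ℕ) : tC n a ≠ tA := by
  intro h; exact col_ne_zero _ _ (congrArg Prod.fst h)

lemma tBl_ne_tA : tBl ≠ tA := by
  intro h; exact col_ne_zero _ _ (congrArg Prod.fst h)

lemma tT_ne_tA (σ k a) : tT σ k a ≠ tA := by
  intro h; exact col_ne_zero _ _ (congrArg Prod.fst h)

lemma tC_ne_tBl (n a : ℕ) : tC n a ≠ tBl := by
  intro h; exact col_ne (by norm_num) (congrArg Prod.fst h)

lemma tT_ne_tBl (σ k a) : tT σ k a ≠ tBl := by
  intro h; exact col_ne (by norm_num) (congrArg Prod.fst h)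

lemma tT_ne_tC (σ k a n b) : tT σ k a ≠ tC n b := by
  intro h; exact col_ne (by norm_num) (congrArg Prod.fst h)

def wτ (n : ℕ) : List ℕ := ofNat (List ℕ) n.unpair.1
def wσ (n : ℕ) : List ℕ := wτ n ++ n.unpair.2.unpair.1 :: ofNat (List ℕ) n.unpair.2.unpair.2

def tileOf (m : ℕ) : WangTile := ofNat WangTile m

@[simp] lemma tileOf_encode (t : WangTile) : tileOf (encode t) = t := ofNat_encode t

def ansAux (t : WangTile) (v1 v2 : ℕ) : ℕ :=
  if t = tA ∨ t = tBl then 1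
  else if t = tC (nOf t) (aOf t) then (if v1 = 1 ∧ v2 ≠ 1 then 1 else 0)
  else if t = tT (sOf t) (kOf t) (aOf t) then (if v1 = 1 then 1 else 0)
  else 0

def ansFun : ℕ × ℕ × ℕ → ℕ := fun x => ansAux (tileOf x.1) x.2.1 x.2.2

def q1Aux (t : WangTile) (m : ℕ) : ℕ :=
  if t = tC (nOf t) (aOf t) then encode (wσ (nOf t))
  else if t = tT (sOf t) (kOf t) (aOf t) then encode (sOf t ++ [kOf t])
  else m

def q1Fun (m : ℕ) : ℕ := q1Aux (tileOf m) m

def q2Aux (t : WangTile) (m : ℕ) : ℕ :=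
  if t = tC (nOf t) (aOf t) then encode (wτ (nOf t)) else m

def q2Fun (m : ℕ) : ℕ := q2Aux (tileOf m) m

def F : ℕ × ℕ →. ℕ := fun x =>
  (Phi x.1 x.2).bind fun v =>
    if v ≤ 1 then
      (Phi x.1 (q1Fun x.2)).bind fun v1 =>
        (Phi x.1 (q2Fun x.2)).map fun v2 => ansFun (x.2, v1, v2)
    else Part.some v

end W2P

namespace W2P
open Encodable Denumerable Primrec

lemma tile_pr : Primrec (fun m => ofNat WangTile m) := Primrec.ofNat WangTile

lemma payOf_pr : Primrec (fun t : WangTile => (t.1 - 1).unpair.2) :=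
  Primrec.snd.comp (Primrec.unpair.comp
    (Primrec.nat_sub.comp Primrec.fst (Primrec.const 1)))

lemma nOf_pr : Primrec nOf := Primrec.fst.comp (Primrec.unpair.comp payOf_pr)

lemma aOf_pr : Primrec aOf := Primrec.snd.comp (Primrec.unpair.comp payOf_pr)

lemma sOf_pr : Primrec sOf := (Primrec.ofNat (List ℕ)).comp nOf_pr

lemma kOf_pr : Primrec kOf :=
  Primrec.list_headI.comp (Primrec.list_reverse.comp ((Primrec.ofNat (List ℕ)).comp
    (Primrec.snd.comp (Primrec.unpair.comp
      (Primrec.nat_sub.comp (Primrec.fst.comp Primrec.snd) (Primrec.const 1))))))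

lemma col_pr : Primrec₂ col := Primrec.succ.comp Primrec₂.natPair

lemma zs_pr : Primrec zs := by
  unfold zs
  exact Primrec.ite
    (PrimrecRel.comp Primrec.eq (Primrec.nat_mod.comp Primrec.id (Primrec.const 2)) (Primrec.const 0))
    (Primrec.nat_add.comp Primrec.id (Primrec.const 2))
    (Primrec.ite (PrimrecRel.comp Primrec.eq Primrec.id (Primrec.const 1)) (Primrec.const 0)
      (Primrec.nat_sub.comp Primrec.id (Primrec.const 2)))

lemma tCof_pr : Primrec (fun t : WangTile => tC (nOf t) (aOf t)) := by
  unfold tC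
  exact Primrec.pair (col_pr.comp (Primrec.const 1) (Primrec₂.natPair.comp nOf_pr aOf_pr))
    (Primrec.pair (col_pr.comp (Primrec.const 2) nOf_pr)
      (Primrec.pair (col_pr.comp (Primrec.const 1)
        (Primrec₂.natPair.comp nOf_pr (zs_pr.comp aOf_pr)))
        (col_pr.comp (Primrec.const 2) nOf_pr)))

lemma tTof_pr : Primrec (fun t : WangTile => tT (sOf t) (kOf t) (aOf t)) := by
  unfold tT
  have hes : Primrec (fun t : WangTile => encode (sOf t)) := Primrec.encode.comp sOf_pr
  have hesk : Primrec (fun t : WangTile => encode (sOf t ++ [kOf t])) :=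
    Primrec.encode.comp (Primrec.list_append.comp sOf_pr
      (Primrec.list_cons.comp kOf_pr (Primrec.const [])))
  exact Primrec.pair (col_pr.comp (Primrec.const 5) (Primrec₂.natPair.comp hes aOf_pr))
    (Primrec.pair (col_pr.comp (Primrec.const 4) hesk)
      (Primrec.pair (col_pr.comp (Primrec.const 5)
          (Primrec₂.natPair.comp hes (zs_pr.comp aOf_pr)))
        (Primrec.ite (PrimrecRel.comp Primrec.eq sOf_pr (Primrec.const ([] : List ℕ)))
          (Primrec.const (col 7 0)) (col_pr.comp (Primrec.const 4) hes))))

lemma wτ_pr : Primrec wτ :=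
  (Primrec.ofNat (List ℕ)).comp (Primrec.fst.comp Primrec.unpair)

lemma wσ_pr : Primrec wσ :=
  Primrec.list_append.comp wτ_pr
    (Primrec.list_cons.comp
      (Primrec.fst.comp (Primrec.unpair.comp (Primrec.snd.comp Primrec.unpair)))
      ((Primrec.ofNat (List ℕ)).comp
        (Primrec.snd.comp (Primrec.unpair.comp (Primrec.snd.comp Primrec.unpair)))))

lemma isC_pred : PrimrecPred (fun t : WangTile => t = tC (nOf t) (aOf t)) :=
  PrimrecRel.comp Primrec.eq Primrec.id tCof_pr

lemma isT_pred : PrimrecPred (fun t : WangTile => t = tT (sOf t) (kOf t) (aOf t)) :=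
  PrimrecRel.comp Primrec.eq Primrec.id tTof_pr

lemma isBase_pred : PrimrecPred (fun t : WangTile => t = tA ∨ t = tBl) :=
  PrimrecPred.or (PrimrecRel.comp Primrec.eq Primrec.id (Primrec.const tA))
    (PrimrecRel.comp Primrec.eq Primrec.id (Primrec.const tBl))

lemma ans_pr : Primrec ansFun := by
  unfold ansFun ansAux tileOf
  have htile : Primrec (fun x : ℕ × ℕ × ℕ => ofNat WangTile x.1) := tile_pr.comp Primrec.fst
  exact Primrec.ite (isBase_pred.comp htile) (Primrec.const 1)
    (Primrec.ite (isC_pred.comp htile)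
      (Primrec.ite (PrimrecPred.and
          (PrimrecRel.comp Primrec.eq (Primrec.fst.comp Primrec.snd) (Primrec.const 1))
          (PrimrecPred.not (PrimrecRel.comp Primrec.eq (Primrec.snd.comp Primrec.snd) (Primrec.const 1))))
        (Primrec.const 1) (Primrec.const 0))
      (Primrec.ite (isT_pred.comp htile)
        (Primrec.ite (PrimrecRel.comp Primrec.eq (Primrec.fst.comp Primrec.snd) (Primrec.const 1))
          (Primrec.const 1) (Primrec.const 0))
        (Primrec.const 0)))

lemma q1_pr : Primrec q1Fun := by
  unfold q1Fun q1Aux tileOf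
  exact Primrec.ite (isC_pred.comp tile_pr)
    (Primrec.encode.comp (wσ_pr.comp (nOf_pr.comp tile_pr)))
    (Primrec.ite (isT_pred.comp tile_pr)
      (Primrec.encode.comp (Primrec.list_append.comp (sOf_pr.comp tile_pr)
        (Primrec.list_cons.comp (kOf_pr.comp tile_pr) (Primrec.const []))))
      Primrec.id)

lemma q2_pr : Primrec q2Fun := by
  unfold q2Fun q2Aux tileOf
  exact Primrec.ite (isC_pred.comp tile_pr)
    (Primrec.encode.comp (wτ_pr.comp (nOf_pr.comp tile_pr)))
    Primrec.id

lemma phiP : Partrec fun x : ℕ × ℕ => Phi x.1 x.2 :=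
  Nat.Partrec.Code.eval_part.comp
    (((Primrec.ofNat Nat.Partrec.Code).to_comp).comp Computable.fst) Computable.snd

attribute [local irreducible] ansFun q1Fun q2Fun in
set_option maxHeartbeats 1000000 in
lemma F_partrec : Partrec F := by
  have hq1 : Computable q1Fun := q1_pr.to_comp
  have hq2 : Computable q2Fun := q2_pr.to_comp
  have hans : Computable ansFun := ans_pr.to_comp
  have hinner : Partrec fun x : ℕ × ℕ =>
      (Phi x.1 (q1Fun x.2)).bind fun v1 =>
        (Phi x.1 (q2Fun x.2)).map fun v2 => ansFun (x.2, v1, v2) := by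
    refine Partrec.bind (phiP.comp (Computable.pair Computable.fst (hq1.comp Computable.snd))) ?_
    refine Partrec.map
      (phiP.comp (Computable.pair (Computable.fst.comp Computable.fst)
        (hq2.comp (Computable.snd.comp Computable.fst)))) ?_
    exact Computable.to₂ (hans.comp (Computable.pair
      (Computable.snd.comp (Computable.fst.comp Computable.fst))
      (Computable.pair (Computable.snd.comp Computable.fst) Computable.snd)))
  have hsome : Partrec fun y : (ℕ × ℕ) × ℕ => Part.some y.2 := Computable.snd
  refine Partrec.bind phiP ?_
  refine (Partrec.cond (c := fun y : (ℕ × ℕ) × ℕ => decide (y.2 ≤ 1))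
    ((PrimrecRel.comp Primrec.nat_le (Primrec.snd) (Primrec.const 1)).decide.to_comp)
    (hinner.comp Computable.fst) hsome).of_eq ?_
  intro y
  by_cases h : y.2 ≤ 1 <;> simp [h]

end W2P

namespace W2P
open Encodable Denumerable List

def Cwit (e n : ℕ) : Prop := wσ n ∈ TSet e ∧ wτ n ∉ TSet e

def S' (e : ℕ) : Set WangTile :=
  {t | t = tA ∨ t = tBl ∨ (∃ n a, t = tC n a ∧ Cwit e n) ∨
    ∃ σ k a, t = tT σ k a ∧ σ ++ [k] ∈ TSet e}

lemma val_of {e : ℕ} (hb : PhiTotalBool e) (m : ℕ) :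
    ∃ v, Phi e m = Part.some v ∧ (v = 0 ∨ v = 1) := by
  obtain ⟨v, hv, h01⟩ := hb m
  exact ⟨v, Part.eq_some_iff.mpr hv, h01⟩

lemma F_eq {e : ℕ} (hb : PhiTotalBool e) (m : ℕ) :
    ∃ v1 v2, Phi e (q1Fun m) = Part.some v1 ∧ Phi e (q2Fun m) = Part.some v2 ∧
      F (e, m) = Part.some (ansFun (m, v1, v2)) := by
  obtain ⟨v, hv, h01⟩ := val_of hb m
  obtain ⟨v1, hv1, _⟩ := val_of hb (q1Fun m)
  obtain ⟨v2, hv2, _⟩ := val_of hb (q2Fun m)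
  have hle : v ≤ 1 := by omega
  refine ⟨v1, v2, hv1, hv2, ?_⟩
  simp [F, hv, hv1, hv2, hle]

lemma ans01 (x : ℕ × ℕ × ℕ) : ansFun x = 0 ∨ ansFun x = 1 := by
  unfold ansFun ansAux; split_ifs <;> simp

lemma totalBool_E {e E : ℕ} (hE : ∀ m, Phi E m = F (e, m)) (hb : PhiTotalBool e) :
    PhiTotalBool E := by
  intro m
  obtain ⟨v1, v2, _, _, hF⟩ := F_eq hb m
  exact ⟨ansFun (m, v1, v2), by rw [hE, hF]; exact Part.mem_some _, ans01 _⟩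

lemma notTotal_E {e E : ℕ} (hE : ∀ m, Phi E m = F (e, m)) (hnb : ¬ PhiTotalBool e) :
    ¬ PhiTotalBool E := by
  intro hb'
  apply hnb
  intro m
  obtain ⟨w, hw, hw01⟩ := hb' m
  rw [hE] at hw
  simp only [F] at hw
  obtain ⟨u, hu, hwu⟩ := Part.mem_bind_iff.mp hw
  by_cases hu1 : u ≤ 1
  · exact ⟨u, hu, by omega⟩
  · rw [if_neg hu1] at hwu
    have hwu' : u = w := Part.mem_some_iff.mp hwu |>.symm
    exact ⟨u, hu, by omega⟩

lemma mem_TSet_iff_some {e : ℕ} {σ : List ℕ} {v : ℕ} (h : Phi e (encode σ) = Part.some v) :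
    σ ∈ TSet e ↔ v = 1 := by
  simp [TSet, h, Part.mem_some_iff, eq_comm]

lemma ite01 {c : Prop} [Decidable c] : (if c then (1:ℕ) else 0) = 1 ↔ c := by
  split_ifs with h <;> simp [h]

lemma tileSet_eq {e E : ℕ} (hE : ∀ m, Phi E m = F (e, m)) (hb : PhiTotalBool e) :
    PhiTileSet E = S' e := by
  ext t
  obtain ⟨v1, v2, hv1, hv2, hF⟩ := F_eq hb (encode t)
  have hmem : t ∈ PhiTileSet E ↔ ansFun (encode t, v1, v2) = 1 := by
    simp [PhiTileSet, hE, hF, Part.mem_some_iff, eq_comm]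
  rw [hmem]
  show ansAux (tileOf (encode t)) v1 v2 = 1 ↔ _
  rw [tileOf_encode]
  unfold ansAux
  by_cases hbase : t = tA ∨ t = tBl
  · rw [if_pos hbase]
    constructor
    · intro _
      rcases hbase with h | h
      · exact Or.inl h
      · exact Or.inr (Or.inl h)
    · intro _; rfl
  rw [if_neg hbase]
  by_cases hC : t = tC (nOf t) (aOf t)
  · rw [if_pos hC]
    have hq1 : q1Fun (encode t) = encode (wσ (nOf t)) := by
      unfold q1Fun q1Aux; rw [tileOf_encode, if_pos hC]
    have hq2 : q2Fun (encode t) = encode (wτ (nOf t)) := by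
      unfold q2Fun q2Aux; rw [tileOf_encode, if_pos hC]
    rw [hq1] at hv1; rw [hq2] at hv2
    have h1 := mem_TSet_iff_some hv1
    have h2 := mem_TSet_iff_some hv2
    rw [ite01]
    constructor
    · rintro ⟨ha, hb2⟩
      exact Or.inr (Or.inr (Or.inl ⟨nOf t, aOf t, hC,
        h1.mpr ha, fun hc => hb2 (h2.mp hc)⟩))
    · rintro (h | h | ⟨n, a, hta, hcw⟩ | ⟨σ, k, a, hta, _⟩)
      · exact absurd (Or.inl h) hbase
      · exact absurd (Or.inr h) hbase
      · subst hta
        simp only [nOf_tC] at h1 h2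
        exact ⟨h1.mp hcw.1, fun hv => hcw.2 (h2.mpr hv)⟩
      · subst hta
        exact absurd hC (tT_ne_tC _ _ _ _ _)
  rw [if_neg hC]
  by_cases hT : t = tT (sOf t) (kOf t) (aOf t)
  · rw [if_pos hT]
    have hq1 : q1Fun (encode t) = encode (sOf t ++ [kOf t]) := by
      unfold q1Fun q1Aux; rw [tileOf_encode, if_neg hC, if_pos hT]
    rw [hq1] at hv1
    have h1 := mem_TSet_iff_some hv1
    rw [ite01]
    constructor
    · intro ha
      exact Or.inr (Or.inr (Or.inr ⟨sOf t, kOf t, aOf t, hT, h1.mpr ha⟩))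
    · rintro (h | h | ⟨n, a, hta, hcw⟩ | ⟨σ, k, a, hta, hts⟩)
      · exact absurd (Or.inl h) hbase
      · exact absurd (Or.inr h) hbase
      · subst hta
        exact absurd hT.symm (tT_ne_tC _ _ _ _ _)
      · subst hta
        simp only [sOf_tT, kOf_tT] at h1
        exact h1.mp hts
  · rw [if_neg hT]
    constructor
    · intro h; exact absurd h (by norm_num)
    · rintro (h | h | ⟨n, a, hta, hcw⟩ | ⟨σ, k, a, hta, _⟩)
      · exact absurd (Or.inl h) hbase
      · exact absurd (Or.inr h) hbase
      · subst hta
        simp at hC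
      · subst hta
        simp at hT

end W2P

namespace W2P
open Encodable Denumerable List

lemma const_tiling (e : ℕ) : IsTiling (S' e) Set.univ (fun _ => tA) :=
  ⟨fun _ _ => Or.inl rfl, fun _ _ _ _ => rfl, fun _ _ _ _ => rfl⟩

lemma step_up {e : ℕ} {f : ℤ × ℤ → WangTile} (hf : IsTiling (S' e) Set.univ f)
    {x y : ℤ} {σ : List ℕ} {k a : ℕ} (h : f (x, y) = tT σ k a) :
    ∃ k' a', f (x, y + 1) = tT (σ ++ [k]) k' a' := by
  have hv := hf.2.2 x y (Set.mem_univ _) (Set.mem_univ _)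
  rw [h] at hv
  rcases hf.1 (x, y + 1) (Set.mem_univ _) with h1 | h1 | ⟨n, b, h1, -⟩ | ⟨σ', k', a', h1, -⟩
  · rw [h1] at hv
    simp only [tT, tA, tileUp, tileBottom] at hv
    exact absurd hv (col_ne_zero _ _)
  · rw [h1] at hv
    simp only [tT, tBl, tileUp, tileBottom] at hv
    exact absurd hv (col_ne (by norm_num))
  · rw [h1] at hv
    simp only [tT, tC, tileUp, tileBottom] at hv
    exact absurd hv (col_ne (by norm_num))
  · rw [h1] at hv
    simp only [tT, tileUp, tileBottom] at hv
    split_ifs at hv with hσ'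
    · exact absurd hv (col_ne (by norm_num))
    · have hss : σ ++ [k] = σ' := encode_list_inj (col_inj hv).2
      exact ⟨k', a', by rw [h1, ← hss]⟩

lemma no_tT {e : ℕ} (htree : IsTree (TSet e)) (hwf : ¬ IllFounded (TSet e))
    {f : ℤ × ℤ → WangTile} (hf : IsTiling (S' e) Set.univ f) {x0 y0 : ℤ}
    {σ0 : List ℕ} {k0 a0 : ℕ} (h0 : f (x0, y0) = tT σ0 k0 a0) : False := by
  have ex : ∀ m : ℕ, ∃ d : List ℕ × ℕ × ℕ, f (x0, y0 + (m : ℤ)) = tT d.1 d.2.1 d.2.2 := by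
    intro m
    induction m with
    | zero => exact ⟨(σ0, k0, a0), by simpa using h0⟩
    | succ m ih =>
      obtain ⟨⟨σ, k, a⟩, hm⟩ := ih
      obtain ⟨k', a', h'⟩ := step_up hf hm
      refine ⟨(σ ++ [k], k', a'), ?_⟩
      have hco : y0 + ((m + 1 : ℕ) : ℤ) = (y0 + (m : ℤ)) + 1 := by push_cast; ring
      rw [hco]; exact h'
  choose d hd using ex
  have hrel : ∀ m, (d (m + 1)).1 = (d m).1 ++ [(d m).2.1] := by
    intro m
    obtain ⟨k', a', h'⟩ := step_up hf (hd m)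
    have hco : y0 + ((m + 1 : ℕ) : ℤ) = (y0 + (m : ℤ)) + 1 := by push_cast; ring
    have h'' := hd (m + 1)
    rw [hco, h'] at h''
    exact ((tT_inj h'').1).symm
  have hmem : ∀ m, (d m).1 ++ [(d m).2.1] ∈ TSet e := by
    intro m
    rcases hf.1 (x0, y0 + (m : ℤ)) (Set.mem_univ _)
      with h1 | h1 | ⟨n, b, h1, -⟩ | ⟨σ', k', a', h1, hts⟩ <;> rw [hd m] at h1
    · exact absurd h1 (tT_ne_tA _ _ _)
    · exact absurd h1 (tT_ne_tBl _ _ _)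
    · exact absurd h1 (tT_ne_tC _ _ _ _ _)
    · obtain ⟨e1, e2, -⟩ := tT_inj h1
      rw [e1, e2]; exact hts
  have hlen : ∀ m, (d m).1.length = (d 0).1.length + m := by
    intro m
    induction m with
    | zero => rfl
    | succ m ih => rw [hrel m]; simp [ih]; omega
  set p : ℕ → ℕ := fun i => (d (i + 1)).1.getD i 0 with hp
  have hkey : ∀ n : ℕ, (List.range n).map p = (d n).1.take n := by
    intro n
    induction n with
    | zero => simp
    | succ n ih =>
      have hn1 : n < (d (n + 1)).1.length := by rw [hlen (n+1)]; omega
      rw [List.range_succ, List.map_append, ih]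
      have h1 : (d n).1.take n = (d (n + 1)).1.take n := by
        rw [hrel n, List.take_append_of_le_length (by rw [hlen n]; omega)]
      rw [h1, List.take_succ, List.getElem?_eq_getElem hn1]
      have h2 : p n = (d (n+1)).1[n]'hn1 := List.getD_eq_getElem _ 0 hn1
      simp [h2]
  apply hwf
  refine ⟨p, fun n => ?_⟩
  rw [hkey]
  exact htree _ (hmem n) _ ((List.take_prefix _ _).trans (List.prefix_append _ _))

lemma all_periodic {e : ℕ} (htree : IsTree (TSet e)) (hwf : ¬ IllFounded (TSet e)) :
    ∀ f : ℤ × ℤ → WangTile, IsTiling (S' e) Set.univ f → IsPeriodic f := by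
  intro f hf
  have base : ∀ q : ℤ × ℤ, f q = tA ∨ f q = tBl := by
    intro q
    rcases hf.1 q (Set.mem_univ _) with h | h | ⟨n, a, h, hcw⟩ | ⟨σ, k, a, h, -⟩
    · exact Or.inl h
    · exact Or.inr h
    · exfalso
      exact hcw.2 (htree (wσ n) hcw.1 (wτ n) (List.prefix_append _ _))
    · exfalso
      exact no_tT htree hwf hf (by rw [← h])
  refine ⟨(1, 0), by simp, ?_⟩
  intro q
  have hh := hf.2.1 q.1 q.2 (Set.mem_univ _) (Set.mem_univ _)
  have hq : q + ((1 : ℤ), (0 : ℤ)) = (q.1 + 1, q.2) := by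
    rw [Prod.ext_iff]; constructor <;> simp
  rw [hq]
  rw [show f q = f (q.1, q.2) from congrArg f (Prod.mk.eta).symm] at *
  rcases base (q.1, q.2) with h | h <;> rcases base (q.1 + 1, q.2) with h' | h' <;>
    rw [h, h'] at hh ⊢ <;>
    simp only [tA, tBl, tileRight, tileLeft] at hh <;>
    first
      | exact absurd hh (col_ne_zero _ _)
      | exact absurd hh.symm (col_ne_zero _ _)

lemma notTree_tiling {e : ℕ} (hnt : ¬ IsTree (TSet e)) :
    ∃ f, IsTiling (S' e) Set.univ f ∧ ¬ IsPeriodic f := by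
  unfold IsTree at hnt
  push_neg at hnt
  obtain ⟨σ, hσ, τ, hpre, hτ⟩ := hnt
  obtain ⟨r, hr⟩ := hpre
  have hrne : r ≠ [] := by
    rintro rfl
    rw [List.append_nil] at hr
    exact hτ (hr ▸ hσ)
  obtain ⟨k, ρ, rfl⟩ := List.exists_cons_of_ne_nil hrne
  set n := Nat.pair (encode τ) (Nat.pair k (encode ρ)) with hn
  have hwτ : wτ n = τ := by simp [wτ, hn, Nat.unpair_pair, ofNat_encode]
  have hwσ : wσ n = σ := by
    simp only [wσ, hwτ, hn, Nat.unpair_pair, ofNat_encode]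
    rw [← hn, hwτ]; exact hr
  have hcw : Cwit e n := ⟨by rw [hwσ]; exact hσ, by rw [hwτ]; exact hτ⟩
  refine ⟨fun q => tC n (iota (q.1 + q.2 * q.2)),
    ⟨fun q _ => Or.inr (Or.inr (Or.inl ⟨n, _, rfl, hcw⟩)), ?_, ?_⟩, ?_⟩
  · intro x y _ _
    show tileRight (tC n (iota (x + y * y))) = tileLeft (tC n (iota (x + 1 + y * y)))
    simp only [tC, tileRight, tileLeft]
    rw [zs_iota]
    have : x + y * y + 1 = x + 1 + y * y := by ring
    rw [this]
  · intro x y _ _; rfl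
  · rintro ⟨⟨vp, vq⟩, hv0, hper⟩
    have h1 := hper (0, 0)
    have h2 := hper (0, 1)
    simp only [Prod.mk_add_mk, zero_add] at h1 h2
    have e1 := iota_inj (tC_inj h1).2
    have e2 := iota_inj (tC_inj h2).2
    have h3 : 2 * vq = 0 := by linear_combination e2 - e1
    have hq : vq = 0 := by omega
    have hp' : vp = 0 := by
      rw [hq] at e1; simpa using e1
    exact hv0 (by rw [hq, hp']; rfl)

lemma path_tiling {e : ℕ} {p : ℕ → ℕ} (hp : ∀ n, (List.range n).map p ∈ TSet e) :
    ∃ f, IsTiling (S' e) Set.univ f ∧ ¬ IsPeriodic f := by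
  set f : ℤ × ℤ → WangTile := fun q =>
    if q.2 < 0 then tBl
    else tT ((List.range q.2.toNat).map p) (p q.2.toNat) (iota q.1) with hfdef
  have hrange : ∀ m : ℕ, (List.range m).map p ++ [p m] = (List.range (m + 1)).map p := by
    intro m
    rw [List.range_succ, List.map_append]
    rfl
  have hne : ∀ m : ℕ, (List.range (m + 1)).map p ≠ [] := by
    intro m h
    have := congrArg List.length h
    simp at this
  refine ⟨f, ⟨?_, ?_, ?_⟩, ?_⟩
  · intro q _
    by_cases h : q.2 < 0
    · rw [hfdef]; simp only [if_pos h]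
      exact Or.inr (Or.inl rfl)
    · rw [hfdef]; simp only [if_neg h]
      exact Or.inr (Or.inr (Or.inr ⟨_, _, _, rfl, by rw [hrange]; exact hp _⟩))
  · intro x y _ _
    by_cases h : y < 0
    · show tileRight (f (x, y)) = tileLeft (f (x + 1, y))
      rw [hfdef]
      simp only [if_pos h]
      rfl
    · show tileRight (f (x, y)) = tileLeft (f (x + 1, y))
      rw [hfdef]
      simp only [if_neg h]
      show tileRight (tT _ _ (iota x)) = tileLeft (tT _ _ (iota (x + 1)))
      simp only [tT, tileRight, tileLeft]
      rw [zs_iota]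
  · intro x y _ _
    by_cases h1 : y + 1 < 0
    · have h0 : y < 0 := by omega
      show tileUp (f (x, y)) = tileBottom (f (x, y + 1))
      rw [hfdef]
      simp only [if_pos h0, if_pos h1]
      rfl
    · by_cases h0 : y < 0
      · have hy : y = -1 := by omega
        subst hy
        show tileUp (f (x, -1)) = tileBottom (f (x, -1 + 1))
        rw [hfdef]
        norm_num
        rfl
      · have ht : (y + 1).toNat = y.toNat + 1 := by omega
        show tileUp (f (x, y)) = tileBottom (f (x, y + 1))
        rw [hfdef]
        simp only [if_neg h0, if_neg h1, ht]
        show tileUp (tT ((List.range y.toNat).map p) (p y.toNat) (iota x)) =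
          tileBottom (tT ((List.range (y.toNat + 1)).map p) (p (y.toNat + 1)) (iota x))
        simp only [tT, tileUp, tileBottom]
        rw [if_neg (hne y.toNat), ← hrange]
  · rintro ⟨⟨vp, vq⟩, hv0, hper⟩
    have h1 := hper (0, 0)
    simp only [Prod.mk_add_mk, zero_add] at h1
    have hf00 : f (0, 0) = tT [] (p 0) (iota 0) := by
      rw [hfdef]; norm_num
    rw [hf00] at h1
    rcases lt_trichotomy vq 0 with hq | hq | hq
    · rw [hfdef] at h1
      simp only [if_pos hq] at h1
      exact tT_ne_tBl _ _ _ h1.symm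
    · subst hq
      rw [hfdef] at h1
      norm_num at h1
      have := iota_inj (tT_inj h1).2.2
      exact hv0 (by rw [this]; rfl)
    · rw [hfdef] at h1
      simp only [if_neg (by omega : ¬ vq < 0)] at h1
      have hnil := (tT_inj h1).1
      have := congrArg List.length hnil
      simp at this
      omega
end W2P

open Nat.Partrec.Code in
/-- `WELL ≤_m PTile`. -/
theorem WELL_manyOneReducible_PTile : (· ∈ WELL) ≤₀ (· ∈ PTile) := by
  have hFp : Partrec fun n : ℕ => W2P.F n.unpair :=
    W2P.F_partrec.comp Primrec.unpair.to_comp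
  obtain ⟨c, hc⟩ := Nat.Partrec.Code.exists_code.mp (Partrec.nat_iff.mp hFp)
  refine ⟨fun e => Encodable.encode (Nat.Partrec.Code.curry c e),
    Primrec.to_comp (Primrec.encode.comp
      (Nat.Partrec.Code.primrec₂_curry.comp (Primrec.const c) Primrec.id)), fun e => ?_⟩
  have hE : ∀ m, Phi (Encodable.encode (curry c e)) m = W2P.F (e, m) := by
    intro m
    show ((Denumerable.ofNat Nat.Partrec.Code
      (Encodable.encode (curry c e))).eval m) = _
    rw [Denumerable.ofNat_encode, Nat.Partrec.Code.eval_curry, hc]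
    simp
  constructor
  · rintro ⟨hb, htree, hwf⟩
    have hS := W2P.tileSet_eq hE hb
    refine ⟨W2P.totalBool_E hE hb, ⟨fun _ => W2P.tA, ?_⟩, ?_⟩
    · rw [hS]; exact W2P.const_tiling e
    · intro f hf
      rw [hS] at hf
      exact W2P.all_periodic htree hwf f hf
  · rintro ⟨hbE, -, hper⟩
    have hb : PhiTotalBool e := by
      by_contra hnb
      exact W2P.notTotal_E hE hnb hbE
    have hS := W2P.tileSet_eq hE hb
    refine ⟨hb, ?_, ?_⟩
    · by_contra hnt
      obtain ⟨f, hf, hnp⟩ := W2P.notTree_tiling hnt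
      exact hnp (hper f (by rw [hS]; exact hf))
    · rintro ⟨p, hp⟩
      obtain ⟨f, hf, hnp⟩ := W2P.path_tiling hp
      exact hnp (hper f (by rw [hS]; exact hf))
end
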